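/- arXiv:2208.06788 — 8 statements merged into one kernel-verified Lean document; each statement's English description precedes it below -/
import Mathlib

section
/- Suppose f ∈ C²([t0,t1)) (with t1 > t0) solves the ODE with the given initial data f(t0) = f̊ > 0. Then f(t) > 0 for all t ∈ [t0,t1). -/
open Real Set
open Topology Filter

/-- If `f ∈ C²([t0,t1))` solves the ODE
`f'' + (a/t) f' - (b/t²) f (1+f) - (c/(1+f)) (f')² = 0` with initial data
`f(t0) = f̊ > 0`, `f'(t0) = f̊0 > 0`, then `f(t) > 0` for all `t ∈ [t0,t1)`. -/
theorem stmt_1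
    (t0 t1 a b c fi fi0 : ℝ) (f : ℝ → ℝ)
    (ht0 : 0 < t0) (ht01 : t0 < t1)
    (ha : 1 < a) (hb : 0 < b) (hc : 1 < c) (hc' : c < 3 / 2)
    (hfi : 0 < fi) (hfi0 : 0 < fi0)
    (hreg : ContDiffOn ℝ 2 f (Set.Ico t0 t1))
    (hode : ∀ t ∈ Set.Ico t0 t1,
      deriv (deriv f) t + (a / t) * deriv f t
        - (b / t ^ 2) * f t * (1 + f t)
        - (c / (1 + f t)) * (deriv f t) ^ 2 = 0)
    (hft0 : f t0 = fi) (hft0' : deriv f t0 = fi0) :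
    ∀ t ∈ Set.Ico t0 t1, 0 < f t := by
  set g := deriv f with hg
  have hIcoU : UniqueDiffOn ℝ (Ico t0 t1) := uniqueDiffOn_Ico t0 t1
  -- deriv f agrees with derivWithin on Ico
  have hEq : EqOn (derivWithin f (Ico t0 t1)) g (Ico t0 t1) := by
    intro t ht
    rcases eq_or_lt_of_le ht.1 with h | h
    · have hdiff : DifferentiableAt ℝ f t := by
        by_contra hnd
        have h0 : deriv f t = 0 := deriv_zero_of_not_differentiableAt hnd
        rw [← hg, ← h] at h0
        rw [h0] at hft0'
        exact absurd hft0'.symm (ne_of_gt hfi0)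
      exact hdiff.derivWithin (hIcoU t ht)
    · exact derivWithin_of_mem_nhds (Ico_mem_nhds h ht.2)
  have hgcont : ContinuousOn g (Ico t0 t1) :=
    (hreg.continuousOn_derivWithin hIcoU (by norm_num)).congr hEq.symm
  -- g is C¹ on the open interior, hence differentiable there
  have hC1 : ContDiffOn ℝ 1 g (Ioo t0 t1) :=
    (hreg.mono Ioo_subset_Ico_self).deriv_of_isOpen isOpen_Ioo (by norm_num)
  -- Key claim: g > 0 on Ico t0 t1
  have key : ∀ t ∈ Ico t0 t1, 0 < g t := by
    by_contra hcon
    push_neg at hcon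
    obtain ⟨w, hw, hgw⟩ := hcon
    -- first time g ≤ 0
    set T : Set ℝ := Icc t0 w ∩ g ⁻¹' Iic 0 with hT
    have hTne : T.Nonempty := ⟨w, ⟨hw.1, le_refl w⟩, hgw⟩
    have hTbdd : BddBelow T := ⟨t0, fun x hx => hx.1.1⟩
    have hIccsub : Icc t0 w ⊆ Ico t0 t1 := fun x hx => ⟨hx.1, lt_of_le_of_lt hx.2 hw.2⟩
    have hTclosed : IsClosed T :=
      (hgcont.mono hIccsub).preimage_isClosed_of_isClosed isClosed_Icc
        (isClosed_Iic (a := (0:ℝ)))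
    set s := sInf T with hs
    have hsT : s ∈ T := hTclosed.csInf_mem hTne hTbdd
    have hsIco : s ∈ Ico t0 t1 := hIccsub hsT.1
    have hgs_le : g s ≤ 0 := hsT.2
    have hpos : ∀ t, t0 ≤ t → t < s → 0 < g t := by
      intro t h1 h2
      by_contra hle
      push_neg at hle
      have : t ∈ T := ⟨⟨h1, le_trans h2.le hsT.1.2⟩, hle⟩
      exact absurd (csInf_le hTbdd this) (not_le.mpr h2)
    have hst0 : t0 < s := by
      rcases eq_or_lt_of_le hsT.1.1 with h | h
      · exfalso
        rw [← h, hft0'] at hgs_le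
        exact absurd hgs_le (not_le.mpr hfi0)
      · exact h
    -- g s = 0 by continuity from the left
    have hgs0 : g s = 0 := by
      refine le_antisymm hgs_le ?_
      have hcw : ContinuousWithinAt g (Ico t0 s) s :=
        (hgcont s hsIco).mono (fun x hx => ⟨hx.1, lt_of_lt_of_le hx.2 hsIco.2.le⟩)
      have hne : (𝓝[Ico t0 s] s).NeBot := by
        rw [← mem_closure_iff_nhdsWithin_neBot, closure_Ico (ne_of_lt hst0)]
        exact ⟨hst0.le, le_refl s⟩
      exact ge_of_tendsto hcw (Filter.eventually_of_mem self_mem_nhdsWithin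
        fun x hx => (hpos x hx.1 hx.2).le)
    -- f is increasing on [t0, s], so f s > 0
    have hmono : StrictMonoOn f (Icc t0 s) := by
      apply strictMonoOn_of_deriv_pos (convex_Icc t0 s)
      · exact hreg.continuousOn.mono (fun x hx => ⟨hx.1, lt_of_le_of_lt hx.2 hsIco.2⟩)
      · intro x hx
        rw [interior_Icc] at hx
        exact hpos x hx.1.le hx.2
    have hfs : 0 < f s := by
      have := hmono ⟨le_refl t0, hst0.le⟩ ⟨hst0.le, le_refl s⟩ hst0
      rw [hft0] at this
      exact lt_trans hfi this
    -- g differentiable at s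
    have hsIoo : s ∈ Ioo t0 t1 := ⟨hst0, hsIco.2⟩
    have hdg : DifferentiableAt ℝ g s :=
      ((hC1.differentiableOn one_ne_zero).differentiableAt (isOpen_Ioo.mem_nhds hsIoo))
    -- deriv g s ≤ 0 from the left
    have hderiv_le : deriv g s ≤ 0 := by
      have hslope : Filter.Tendsto (slope g s) (𝓝[≠] s) (𝓝 (deriv g s)) :=
        hasDerivAt_iff_tendsto_slope.mp hdg.hasDerivAt
      have hsub : 𝓝[Ioo t0 s] s ≤ 𝓝[≠] s :=
        nhdsWithin_mono s (fun x hx => ne_of_lt hx.2)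
      have hne : (𝓝[Ioo t0 s] s).NeBot := by
        rw [← mem_closure_iff_nhdsWithin_neBot, closure_Ioo (ne_of_lt hst0)]
        exact ⟨hst0.le, le_refl s⟩
      refine le_of_tendsto (hslope.mono_left hsub) ?_
      refine Filter.eventually_of_mem self_mem_nhdsWithin fun x hx => ?_
      have hgx : 0 < g x := hpos x hx.1.le hx.2
      have hsl : slope g s x = g x / (x - s) := by
        rw [slope_def_field, hgs0, sub_zero]
      rw [hsl]
      exact le_of_lt (div_neg_of_pos_of_neg hgx (by linarith [hx.2]))
    -- but the ODE forces deriv g s > 0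
    have hode_s := hode s hsIco
    rw [hgs0] at hode_s
    have hspos : 0 < s := lt_trans ht0 hst0
    have hpos' : 0 < b / s ^ 2 * f s * (1 + f s) := by positivity
    nlinarith [hode_s, hderiv_le, hpos']
  -- conclude: f is increasing, hence positive
  intro t ht
  rcases eq_or_lt_of_le ht.1 with h | h
  · rw [← h, hft0]; exact hfi
  · have hmono : StrictMonoOn f (Icc t0 t) := by
      apply strictMonoOn_of_deriv_pos (convex_Icc t0 t)
      · exact hreg.continuousOn.mono (fun x hx => ⟨hx.1, lt_of_le_of_lt hx.2 ht.2⟩)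
      · intro x hx
        rw [interior_Icc] at hx
        exact key x ⟨hx.1.le, lt_trans hx.2 ht.2⟩
    have := hmono ⟨le_refl t0, h.le⟩ ⟨h.le, le_refl t⟩ h
    rw [hft0] at this
    exact lt_trans hfi this
end

section
/- Suppose f ∈ C²([t0,t1)) (with t1 > t0) solves the ODE with the given initial data. Then for every t ∈ [t0,t1) the function g satisfies g(t) = (1 + b·B·∫_{t0}^t s^(a−2)·f(s)·(1+f(s))^(1−c) ds)^(−A/b); moreover g(t) ∈ (0,1] for all t ∈ [t0,t1) and g(t0) = 1. -/
open Real Set MeasureTheory intervalIntegral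

/-- If `f ∈ C²([t0,t1))` solves the ODE with the given initial data, then
`g(t) = (1 + b·B·∫_{t0}^t s^(a−2) f(s) (1+f(s))^(1−c) ds)^(−A/b)` for all `t ∈ [t0,t1)`;
moreover `g(t) ∈ (0,1]` on `[t0,t1)` and `g(t0) = 1`. -/
theorem stmt_2
    (t0 t1 a b c A B fi fi0 : ℝ) (f g : ℝ → ℝ)
    (ht0 : 0 < t0) (ht01 : t0 < t1)
    (ha : 1 < a) (hb : 0 < b) (hc : 1 < c) (hc' : c < 3 / 2)
    (hfi : 0 < fi) (hfi0 : 0 < fi0)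
    (hA : 0 < A) (hA' : A < 2 * b / (3 - 2 * c))
    (hB : B = (1 + fi) ^ c / (t0 ^ a * fi0))
    (hg : ∀ t, g t = Real.exp (-A * ∫ s in t0..t, f s * (1 + f s) / (s ^ 2 * deriv f s)))
    (hreg : ContDiffOn ℝ 2 f (Set.Ico t0 t1))
    (hode : ∀ t ∈ Set.Ico t0 t1,
      deriv (deriv f) t + (a / t) * deriv f t
        - (b / t ^ 2) * f t * (1 + f t)
        - (c / (1 + f t)) * (deriv f t) ^ 2 = 0)
    (hft0 : f t0 = fi) (hft0' : deriv f t0 = fi0) :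
    (∀ t ∈ Set.Ico t0 t1,
        g t = (1 + b * B * ∫ s in t0..t, s ^ (a - 2) * f s * (1 + f s) ^ (1 - c))
            ^ (-(A / b)) ∧
        g t ∈ Set.Ioc (0 : ℝ) 1) ∧
    g t0 = 1 := by
  have hIco : Set.Ico t0 t1 ∈ nhds t0 → True := fun _ => trivial
  -- basic positivity
  have hBpos : 0 < B := by
    rw [hB]
    positivity
  -- f is differentiable at t0 (two-sided)
  have hdiff0 : DifferentiableAt ℝ f t0 := by
    by_contra h
    rw [deriv_zero_of_not_differentiableAt h] at hft0'
    exact absurd hft0'.symm (ne_of_gt hfi0)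
  -- f has derivative `deriv f x` at every x ∈ Ico
  have hdf : ∀ x ∈ Set.Ico t0 t1, HasDerivAt f (deriv f x) x := by
    intro x hx
    rcases eq_or_lt_of_le hx.1 with h | h
    · exact (h ▸ hdiff0).hasDerivAt
    · exact ((hreg.contDiffAt (Ico_mem_nhds h hx.2)).differentiableAt
        (by norm_num)).hasDerivAt
  -- deriv f is continuous on Ico
  have hcont_df : ContinuousOn (deriv f) (Set.Ico t0 t1) := by
    have h1 : ContinuousOn (derivWithin f (Set.Ico t0 t1)) (Set.Ico t0 t1) :=
      (hreg.derivWithin (m := 1) (uniqueDiffOn_Ico t0 t1) (by norm_num)).continuousOn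
    refine h1.congr ?_
    intro x hx
    exact ((hdf x hx).hasDerivWithinAt.derivWithin ((uniqueDiffOn_Ico t0 t1) x hx)).symm
  -- second derivative at interior points
  have hdf2 : ∀ x ∈ Set.Ioo t0 t1, HasDerivAt (deriv f) (deriv (deriv f) x) x := by
    intro x hx
    have h1 : ContDiffOn ℝ 1 (deriv f) (Set.Ioo t0 t1) :=
      (hreg.mono Ioo_subset_Ico_self).deriv_of_isOpen isOpen_Ioo (by norm_num)
    exact ((h1.contDiffAt (isOpen_Ioo.mem_nhds hx)).differentiableAt one_ne_zero).hasDerivAt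
  -- positivity of deriv f and f on Ico
  have hpos : ∀ t ∈ Set.Ico t0 t1, (∀ s ∈ Set.Icc t0 t, 0 < deriv f s) ∧ fi ≤ f t := by
    intro t ht
    have hIcc : Set.Icc t0 t ⊆ Set.Ico t0 t1 := fun s hs => ⟨hs.1, lt_of_le_of_lt hs.2 ht.2⟩
    have key : ∀ s ∈ Set.Icc t0 t, 0 < deriv f s := by
      by_contra hcon
      push_neg at hcon
      set Z : Set ℝ := Set.Icc t0 t ∩ (deriv f) ⁻¹' (Set.Iic 0) with hZ
      have hZne : Z.Nonempty := by
        obtain ⟨s, hs1, hs2⟩ := hcon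
        exact ⟨s, hs1, hs2⟩
      have hZcl : IsClosed Z :=
        (hcont_df.mono hIcc).preimage_isClosed_of_isClosed isClosed_Icc isClosed_Iic
      have hZbdd : BddBelow Z := ⟨t0, fun s hs => hs.1.1⟩
      set q := sInf Z with hq
      have hqZ : q ∈ Z := hZcl.csInf_mem hZne hZbdd
      have hqIcc : q ∈ Set.Icc t0 t := hqZ.1
      have hqle : deriv f q ≤ 0 := hqZ.2
      have hqne : q ≠ t0 := by
        intro h
        rw [h, hft0'] at hqle
        linarith
      have hq0 : t0 < q := lt_of_le_of_ne hqIcc.1 (Ne.symm hqne)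
      have hlt : ∀ s ∈ Set.Ico t0 q, 0 < deriv f s := by
        intro s hs
        by_contra h
        push_neg at h
        have : s ∈ Z := ⟨⟨hs.1, le_trans (le_of_lt hs.2) hqIcc.2⟩, h⟩
        exact absurd (csInf_le hZbdd this) (not_le.mpr hs.2)
      have hIccq : Set.Icc t0 q ⊆ Set.Ico t0 t1 := fun s hs =>
        ⟨hs.1, lt_of_le_of_lt (le_trans hs.2 hqIcc.2) ht.2⟩
      have hmono : StrictMonoOn f (Set.Icc t0 q) := by
        refine strictMonoOn_of_deriv_pos (convex_Icc t0 q) (hreg.continuousOn.mono hIccq) ?_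
        intro x hx
        rw [interior_Icc] at hx
        exact hlt x ⟨le_of_lt hx.1, hx.2⟩
      have hfq : fi < f q := by
        have := hmono (Set.left_mem_Icc.mpr (le_of_lt hq0))
          (Set.right_mem_Icc.mpr (le_of_lt hq0)) hq0
        rwa [hft0] at this
      -- deriv f q = 0 by left continuity
      have hge : 0 ≤ deriv f q := by
        have hcw : ContinuousWithinAt (deriv f) (Set.Ioo t0 q) q :=
          (hcont_df q (hIccq (Set.right_mem_Icc.mpr (le_of_lt hq0)))).mono
            (fun s hs => hIccq ⟨le_of_lt hs.1, le_of_lt hs.2⟩)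
        have hne : (nhdsWithin q (Set.Ioo t0 q)).NeBot := by
          rw [← mem_closure_iff_nhdsWithin_neBot, closure_Ioo (ne_of_lt hq0)]
          exact ⟨le_of_lt hq0, le_refl q⟩
        refine ge_of_tendsto hcw ?_
        filter_upwards [eventually_mem_nhdsWithin] with s hs
        exact le_of_lt (hlt s ⟨le_of_lt hs.1, hs.2⟩)
      have hdq : deriv f q = 0 := le_antisymm hqle hge
      have hqIoo : q ∈ Set.Ioo t0 t1 := ⟨hq0, lt_of_le_of_lt hqIcc.2 ht.2⟩
      -- second derivative positive at q
      have h1fq : 0 < 1 + f q := by linarith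
      have hE : deriv (deriv f) q = (b / q ^ 2) * f q * (1 + f q) := by
        have := hode q (hIccq (Set.right_mem_Icc.mpr (le_of_lt hq0)))
        rw [hdq] at this
        ring_nf at this ⊢
        linarith
      have hEpos : 0 < deriv (deriv f) q := by
        rw [hE]
        have hq' : 0 < q := lt_trans ht0 hq0
        have hfq' : 0 < f q := lt_trans hfi hfq
        have h2 : 0 < b / q ^ 2 := by positivity
        nlinarith [mul_pos (mul_pos h2 hfq') h1fq]
      -- slope argument
      have hsl := hasDerivAt_iff_tendsto_slope.mp (hdf2 q hqIoo)
      have hev : ∀ᶠ s in nhdsWithin q {q}ᶜ, 0 < slope (deriv f) q s :=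
        hsl.eventually (eventually_gt_nhds hEpos)
      have hle' : nhdsWithin q (Set.Ioo t0 q) ≤ nhdsWithin q {q}ᶜ :=
        nhdsWithin_mono q (fun s hs => ne_of_lt hs.2)
      have hne : (nhdsWithin q (Set.Ioo t0 q)).NeBot := by
        rw [← mem_closure_iff_nhdsWithin_neBot, closure_Ioo (ne_of_lt hq0)]
        exact ⟨le_of_lt hq0, le_refl q⟩
      obtain ⟨s, hs1, hs2⟩ := ((hev.filter_mono hle').and eventually_mem_nhdsWithin).exists
      -- hs1 : 0 < slope (deriv f) q s, hs2 : s ∈ Ioo t0 q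
      have hslope : slope (deriv f) q s = deriv f s / (s - q) := by
        rw [slope_def_field, hdq, sub_zero]
      have hsq : s - q < 0 := by linarith [hs2.2]
      have : deriv f s < 0 := by
        rw [hslope] at hs1
        by_contra h
        push_neg at h
        have := div_nonpos_of_nonneg_of_nonpos h (le_of_lt hsq)
        linarith
      exact absurd (hlt s ⟨le_of_lt hs2.1, hs2.2⟩) (not_lt.mpr (le_of_lt this))
    refine ⟨key, ?_⟩
    rcases eq_or_lt_of_le ht.1 with h | h
    · rw [← h, hft0]
    · have hmono : StrictMonoOn f (Set.Icc t0 t) := by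
        refine strictMonoOn_of_deriv_pos (convex_Icc t0 t) (hreg.continuousOn.mono hIcc) ?_
        intro x hx
        rw [interior_Icc] at hx
        exact key x ⟨le_of_lt hx.1, le_of_lt hx.2⟩
      have := hmono (Set.left_mem_Icc.mpr (le_of_lt h)) (Set.right_mem_Icc.mpr (le_of_lt h)) h
      rw [hft0] at this
      linarith
  have hdfpos : ∀ s ∈ Set.Ico t0 t1, 0 < deriv f s := fun s hs =>
    (hpos s hs).1 s (Set.right_mem_Icc.mpr hs.1)
  have hfge : ∀ s ∈ Set.Ico t0 t1, fi ≤ f s := fun s hs => (hpos s hs).2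
  have h1f : ∀ s ∈ Set.Ico t0 t1, 0 < 1 + f s := fun s hs => by linarith [hfge s hs]
  have hfpos : ∀ s ∈ Set.Ico t0 t1, 0 < f s := fun s hs => lt_of_lt_of_le hfi (hfge s hs)
  -- the auxiliary function u
  set u : ℝ → ℝ := fun x => B * x ^ a * deriv f x * (1 + f x) ^ (-c) with hu
  have hu0 : u t0 = 1 := by
    simp only [hu]
    rw [hft0', hft0, hB, Real.rpow_neg (by linarith : (0:ℝ) ≤ 1 + fi)]
    have h1 : (0:ℝ) < t0 ^ a := Real.rpow_pos_of_pos ht0 a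
    have h2 : (0:ℝ) < (1 + fi) ^ c := Real.rpow_pos_of_pos (by linarith) c
    field_simp
  have hupos : ∀ x ∈ Set.Ico t0 t1, 0 < u x := by
    intro x hx
    simp only [hu]
    have h1 : 0 < x ^ a := Real.rpow_pos_of_pos (lt_of_lt_of_le ht0 hx.1) a
    have h2 : 0 < (1 + f x) ^ (-c) := Real.rpow_pos_of_pos (h1f x hx) _
    have h3 := hdfpos x hx
    positivity
  -- derivative of u
  have hu' : ∀ x ∈ Set.Ioo t0 t1, HasDerivAt u
      (b * B * (x ^ (a - 2) * f x * (1 + f x) ^ (1 - c))) x := by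
    intro x hx
    have hxI : x ∈ Set.Ico t0 t1 := Ioo_subset_Ico_self hx
    have hx0 : 0 < x := lt_of_lt_of_le ht0 hxI.1
    have hP : 0 < 1 + f x := h1f x hxI
    have hd1 : HasDerivAt (fun y : ℝ => y ^ a) (a * x ^ (a - 1)) x :=
      Real.hasDerivAt_rpow_const (Or.inl (ne_of_gt hx0))
    have hd2 : HasDerivAt f (deriv f x) x := hdf x hxI
    have hd3 : HasDerivAt (fun y => (1 + f y) ^ (-c))
        (deriv f x * (-c) * (1 + f x) ^ (-c - 1)) x := by
      exact (hd2.const_add 1).rpow_const (Or.inl (ne_of_gt hP))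
    have hd4 : HasDerivAt (deriv f) (deriv (deriv f) x) x := hdf2 x hx
    have hmain := (((hd1.mul hd4).mul hd3).const_mul B)
    have heq : (fun y : ℝ => B * (y ^ a * deriv f y * ((1 + f y) ^ (-c)))) = u := by
      funext y; simp only [hu]; ring
    simp only [Pi.mul_apply] at hmain
    rw [heq] at hmain
    refine hmain.congr_deriv ?_
    have hE : deriv (deriv f) x
        = b / x ^ 2 * f x * (1 + f x) + c / (1 + f x) * (deriv f x) ^ 2
          - a / x * deriv f x := by
      linarith [hode x hxI]
    have e1 : x ^ (a - 1) = x ^ (a - 2) * x := by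
      rw [← Real.rpow_add_one (ne_of_gt hx0) (a - 2)]; congr 1; ring
    have e2 : x ^ a = x ^ (a - 2) * (x * x) := by
      rw [← mul_assoc, ← Real.rpow_add_one (ne_of_gt hx0) (a - 2),
        ← Real.rpow_add_one (ne_of_gt hx0) (a - 2 + 1)]
      congr 1; ring
    have e3 : (1 + f x) ^ (-c - 1) = (1 + f x) ^ (-c) / (1 + f x) :=
      Real.rpow_sub_one (ne_of_gt hP) (-c)
    have e4 : (1 + f x) ^ (1 - c) = (1 + f x) ^ (-c) * (1 + f x) := by
      rw [← Real.rpow_add_one (ne_of_gt hP) (-c)]; congr 1; ring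
    rw [hE, e1, e2, e3, e4]
    have hx2 : x ^ 2 = x * x := sq x
    rw [hx2]
    field_simp
    ring
  -- continuity of u
  have hcontu : ContinuousOn u (Set.Ico t0 t1) := by
    simp only [hu]
    refine ((continuousOn_const.mul ?_).mul hcont_df).mul ?_
    · exact continuousOn_id.rpow_const fun x hx =>
        Or.inl (ne_of_gt (lt_of_lt_of_le ht0 hx.1))
    · exact (continuousOn_const.add hreg.continuousOn).rpow_const
        fun x hx => Or.inl (ne_of_gt (h1f x hx))
  -- continuity of the first integrand
  have hcontI : ContinuousOn (fun s => s ^ (a - 2) * f s * (1 + f s) ^ (1 - c))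
      (Set.Ico t0 t1) := by
    refine ((?_ : ContinuousOn _ _).mul hreg.continuousOn).mul ?_
    · exact continuousOn_id.rpow_const fun x hx =>
        Or.inl (ne_of_gt (lt_of_lt_of_le ht0 hx.1))
    · exact (continuousOn_const.add hreg.continuousOn).rpow_const
        fun x hx => Or.inl (ne_of_gt (h1f x hx))
  -- FTC for u
  have hI : ∀ t ∈ Set.Ico t0 t1,
      u t = 1 + b * B * ∫ s in t0..t, s ^ (a - 2) * f s * (1 + f s) ^ (1 - c) := by
    intro t ht
    have hIcc : Set.Icc t0 t ⊆ Set.Ico t0 t1 := fun s hs =>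
      ⟨hs.1, lt_of_le_of_lt hs.2 ht.2⟩
    have huIcc : Set.uIcc t0 t = Set.Icc t0 t := Set.uIcc_of_le ht.1
    have hint : IntervalIntegrable
        (fun s => b * B * (s ^ (a - 2) * f s * (1 + f s) ^ (1 - c))) volume t0 t := by
      refine ContinuousOn.intervalIntegrable ?_
      rw [huIcc]
      exact continuousOn_const.mul (hcontI.mono hIcc)
    have hftc := intervalIntegral.integral_eq_sub_of_hasDeriv_right_of_le ht.1
      (hcontu.mono hIcc)
      (fun x hx => ((hu' x ⟨hx.1, lt_trans hx.2 ht.2⟩).hasDerivWithinAt))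
      hint
    rw [intervalIntegral.integral_const_mul, hu0] at hftc
    linarith
  -- FTC for the log integral
  have hlog : ∀ t ∈ Set.Ico t0 t1,
      (∫ s in t0..t, f s * (1 + f s) / (s ^ 2 * deriv f s))
        = (1 / b) * Real.log (u t) := by
    intro t ht
    have hIcc : Set.Icc t0 t ⊆ Set.Ico t0 t1 := fun s hs =>
      ⟨hs.1, lt_of_le_of_lt hs.2 ht.2⟩
    have huIcc : Set.uIcc t0 t = Set.Icc t0 t := Set.uIcc_of_le ht.1
    have hcontL : ContinuousOn (fun x => (1 / b) * Real.log (u x)) (Set.Icc t0 t) :=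
      continuousOn_const.mul ((hcontu.mono hIcc).log
        fun x hx => ne_of_gt (hupos x (hIcc hx)))
    have hd : ∀ x ∈ Set.Ioo t0 t,
        HasDerivWithinAt (fun x => (1 / b) * Real.log (u x))
          (f x * (1 + f x) / (x ^ 2 * deriv f x)) (Set.Ioi x) x := by
      intro x hx
      have hxI : x ∈ Set.Ioo t0 t1 := ⟨hx.1, lt_trans hx.2 ht.2⟩
      have hxIco : x ∈ Set.Ico t0 t1 := Ioo_subset_Ico_self hxI
      have hx0 : 0 < x := lt_of_lt_of_le ht0 hxIco.1
      have hP : 0 < 1 + f x := h1f x hxIco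
      have hF' : 0 < deriv f x := hdfpos x hxIco
      have hux : 0 < u x := hupos x hxIco
      have hder := ((hu' x hxI).log (ne_of_gt hux)).const_mul (1 / b)
      have hval : (1 / b) * (b * B * (x ^ (a - 2) * f x * (1 + f x) ^ (1 - c)) / u x)
          = f x * (1 + f x) / (x ^ 2 * deriv f x) := by
        simp only [hu]
        have e2 : x ^ a = x ^ (a - 2) * (x * x) := by
          rw [← mul_assoc, ← Real.rpow_add_one (ne_of_gt hx0) (a - 2),
            ← Real.rpow_add_one (ne_of_gt hx0) (a - 2 + 1)]
          congr 1; ring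
        have e4 : (1 + f x) ^ (1 - c) = (1 + f x) ^ (-c) * (1 + f x) := by
          rw [← Real.rpow_add_one (ne_of_gt hP) (-c)]; congr 1; ring
        have hxa2 : (0:ℝ) < x ^ (a - 2) := Real.rpow_pos_of_pos hx0 _
        have hPc : (0:ℝ) < (1 + f x) ^ (-c) := Real.rpow_pos_of_pos hP _
        rw [e2, e4, (sq x : x ^ 2 = x * x)]
        field_simp
      rw [hval] at hder
      exact hder.hasDerivWithinAt
    have hinth : IntervalIntegrable
        (fun s => f s * (1 + f s) / (s ^ 2 * deriv f s)) volume t0 t := by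
      refine ContinuousOn.intervalIntegrable ?_
      rw [huIcc]
      refine ContinuousOn.div
        ((hreg.continuousOn.mono hIcc).mul
          (continuousOn_const.add (hreg.continuousOn.mono hIcc)))
        (((continuousOn_id.pow 2).mul (hcont_df.mono hIcc)))
        ?_
      intro x hx
      have hx0 : 0 < x := lt_of_lt_of_le ht0 hx.1
      have := hdfpos x (hIcc hx)
      positivity
    have hftc := intervalIntegral.integral_eq_sub_of_hasDeriv_right_of_le ht.1
      hcontL hd hinth
    rw [hu0, Real.log_one] at hftc
    rw [hftc]; ring
  -- assembling the result
  refine ⟨?_, ?_⟩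
  · intro t ht
    have hIt := hI t ht
    have hutpos : 0 < u t := hupos t ht
    have hut1 : 1 ≤ u t := by
      rw [hIt]
      have hnn : 0 ≤ ∫ s in t0..t, s ^ (a - 2) * f s * (1 + f s) ^ (1 - c) := by
        refine intervalIntegral.integral_nonneg ht.1 ?_
        intro s hs
        have hs0 : 0 ≤ s := le_trans (le_of_lt ht0) hs.1
        have hsI : s ∈ Set.Ico t0 t1 := ⟨hs.1, lt_of_le_of_lt hs.2 ht.2⟩
        have h1 := le_of_lt (hfpos s hsI)
        have h2 : (0:ℝ) ≤ s ^ (a - 2) := Real.rpow_nonneg hs0 _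
        have h3 : (0:ℝ) ≤ (1 + f s) ^ (1 - c) :=
          Real.rpow_nonneg (le_of_lt (h1f s hsI)) _
        positivity
      nlinarith [mul_nonneg (le_of_lt (mul_pos hb hBpos)) hnn]
    have hgt : g t = u t ^ (-(A / b)) := by
      rw [hg t, hlog t ht, Real.rpow_def_of_pos hutpos]
      congr 1
      ring
    refine ⟨by rw [hgt, hIt], ?_, ?_⟩
    · rw [hgt]; exact Real.rpow_pos_of_pos hutpos _
    · rw [hgt]
      refine Real.rpow_le_one_of_one_le_of_nonpos hut1 ?_
      have : 0 ≤ A / b := le_of_lt (div_pos hA hb)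
      linarith
  · rw [hg t0, intervalIntegral.integral_same]
    simp
end

section
/- Suppose f ∈ C²([t0,t1)) (with t1 > t0) solves the ODE with the given initial data. Then g is strictly decreasing on [t0,t1); in particular g is injective (invertible onto its range) on [t0,t1). -/
open Real Set MeasureTheory intervalIntegral
open Filter Topology

/-- If `f ∈ C²([t0,t1))` solves the ODE with the given initial data, then
`g` is strictly decreasing on `[t0,t1)`; in particular `g` is injective on `[t0,t1)`. -/
theorem stmt_3
    (t0 t1 a b c A B fi fi0 : ℝ) (f g : ℝ → ℝ)
    (ht0 : 0 < t0) (ht01 : t0 < t1)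
    (ha : 1 < a) (hb : 0 < b) (hc : 1 < c) (hc' : c < 3 / 2)
    (hfi : 0 < fi) (hfi0 : 0 < fi0)
    (hA : 0 < A) (hA' : A < 2 * b / (3 - 2 * c))
    (hB : B = (1 + fi) ^ c / (t0 ^ a * fi0))
    (hg : ∀ t, g t = Real.exp (-A * ∫ s in t0..t, f s * (1 + f s) / (s ^ 2 * deriv f s)))
    (hreg : ContDiffOn ℝ 2 f (Set.Ico t0 t1))
    (hode : ∀ t ∈ Set.Ico t0 t1,
      deriv (deriv f) t + (a / t) * deriv f t
        - (b / t ^ 2) * f t * (1 + f t)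
        - (c / (1 + f t)) * (deriv f t) ^ 2 = 0)
    (hft0 : f t0 = fi) (hft0' : deriv f t0 = fi0) :
    StrictAntiOn g (Set.Ico t0 t1) ∧ Set.InjOn g (Set.Ico t0 t1) := by
  have hUD : UniqueDiffOn ℝ (Set.Ico t0 t1) := uniqueDiffOn_Ico t0 t1
  set F := derivWithin f (Set.Ico t0 t1) with hFdef
  have hfc : ContinuousOn f (Set.Ico t0 t1) := hreg.continuousOn
  have hFreg : ContDiffOn ℝ 1 F (Set.Ico t0 t1) := hreg.derivWithin hUD (by norm_num)
  have hFc : ContinuousOn F (Set.Ico t0 t1) := hFreg.continuousOn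
  have hFdiff : DifferentiableOn ℝ F (Set.Ico t0 t1) := hFreg.differentiableOn one_ne_zero
  -- the honest derivative coincides with `F` in the interior
  have hderiv_eq : ∀ s ∈ Set.Ioo t0 t1, deriv f s = F s := fun s hs =>
    (derivWithin_of_mem_nhds (Filter.mem_of_superset (isOpen_Ioo.mem_nhds hs)
      Set.Ioo_subset_Ico_self)).symm
  -- initial value of F
  have hdiff0 : DifferentiableAt ℝ f t0 := by
    by_contra h
    rw [deriv_zero_of_not_differentiableAt h] at hft0'
    exact absurd hft0'.symm (ne_of_gt hfi0)
  have hF0 : F t0 = fi0 := by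
    rw [hFdef, hdiff0.derivWithin (hUD t0 ⟨le_rfl, ht01⟩), hft0']
  -- the ODE satisfied by F in the interior
  have hFode : ∀ τ ∈ Set.Ioo t0 t1,
      HasDerivAt F (-(a/τ) * F τ + (b/τ^2) * f τ * (1 + f τ) + (c/(1 + f τ)) * (F τ)^2) τ := by
    intro τ hτ
    have hmem : Set.Ico t0 t1 ∈ 𝓝 τ :=
      Filter.mem_of_superset (isOpen_Ioo.mem_nhds hτ) Set.Ioo_subset_Ico_self
    have hFd : DifferentiableAt ℝ F τ :=
      (hFdiff τ (Set.Ioo_subset_Ico_self hτ)).differentiableAt hmem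
    have heq : deriv f =ᶠ[𝓝 τ] F := by
      filter_upwards [isOpen_Ioo.mem_nhds hτ] with s hs using hderiv_eq s hs
    have h1 : deriv (deriv f) τ = deriv F τ := heq.deriv_eq
    have h2 := hode τ (Set.Ioo_subset_Ico_self hτ)
    rw [h1, hderiv_eq τ hτ] at h2
    have h3 : deriv F τ = -(a/τ) * F τ + (b/τ^2) * f τ * (1 + f τ) + (c/(1 + f τ)) * (F τ)^2 := by
      linarith
    exact h3 ▸ hFd.hasDerivAt
  -- positivity of F on [t0, t1)
  have hFpos : ∀ y ∈ Set.Ico t0 t1, 0 < F y := by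
    intro y hy
    by_contra hFy
    push_neg at hFy
    set Z := {t | t ∈ Set.Icc t0 y ∧ F t ≤ 0} with hZ
    have hsub : Set.Icc t0 y ⊆ Set.Ico t0 t1 := fun s hs => ⟨hs.1, lt_of_le_of_lt hs.2 hy.2⟩
    have hZclosed : IsClosed Z := by
      have : Z = Set.Icc t0 y ∩ F ⁻¹' Set.Iic 0 := by ext t; simp [hZ]
      rw [this]
      exact ContinuousOn.preimage_isClosed_of_isClosed (hFc.mono hsub) isClosed_Icc isClosed_Iic
    have hZne : Z.Nonempty := ⟨y, ⟨hy.1, le_rfl⟩, hFy⟩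
    have hbdd : BddBelow Z := ⟨t0, fun t ht => ht.1.1⟩
    set τ := sInf Z with hτdef
    have hτZ : τ ∈ Z := hZclosed.csInf_mem hZne hbdd
    have hτ0 : t0 < τ := by
      rcases lt_or_eq_of_le hτZ.1.1 with h | h
      · exact h
      · exact absurd (h ▸ hτZ.2) (by rw [hF0]; exact not_le.2 hfi0)
    have hmin : ∀ s, t0 ≤ s → s < τ → 0 < F s := by
      intro s hs1 hs2
      by_contra h
      push_neg at h
      have hsZ : s ∈ Z := ⟨⟨hs1, le_trans hs2.le hτZ.1.2⟩, h⟩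
      exact absurd (csInf_le hbdd hsZ) (not_le.2 hs2)
    have hτIoo : τ ∈ Set.Ioo t0 t1 := ⟨hτ0, lt_of_le_of_lt hτZ.1.2 hy.2⟩
    have hIccsub : Set.Icc t0 τ ⊆ Set.Ico t0 t1 := fun s hs =>
      ⟨hs.1, lt_of_le_of_lt hs.2 hτIoo.2⟩
    have hmono : StrictMonoOn f (Set.Icc t0 τ) := by
      apply strictMonoOn_of_deriv_pos (convex_Icc _ _) (hfc.mono hIccsub)
      intro s hs
      rw [interior_Icc] at hs
      rw [hderiv_eq s ⟨hs.1, lt_trans hs.2 hτIoo.2⟩]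
      exact hmin s hs.1.le hs.2
    have hfτ : 0 < f τ := by
      have := hmono ⟨le_rfl, hτ0.le⟩ ⟨hτ0.le, le_rfl⟩ hτ0
      rw [hft0] at this
      linarith
    have hD := hFode τ hτIoo
    have hDpos : 0 < -(a/τ) * F τ + (b/τ^2) * f τ * (1 + f τ) + (c/(1 + f τ)) * (F τ)^2 := by
      have hτpos : (0:ℝ) < τ := lt_trans ht0 hτ0
      have h1 : 0 ≤ -(a/τ) * F τ := by
        have : 0 < a / τ := div_pos (by linarith) hτpos
        nlinarith [hτZ.2]
      have h2 : 0 < (b/τ^2) * f τ * (1 + f τ) :=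
        mul_pos (mul_pos (div_pos hb (pow_pos hτpos 2)) hfτ) (by linarith)
      have h3 : 0 ≤ (c/(1 + f τ)) * (F τ)^2 :=
        mul_nonneg (le_of_lt (div_pos (by linarith) (by linarith))) (sq_nonneg _)
      linarith
    -- slope argument: F has positive derivative at τ but F s > 0 ≥ F τ for s < τ
    have hslope := hasDerivAt_iff_tendsto_slope.1 hD
    have hev : ∀ᶠ s in 𝓝[≠] τ, 0 < slope F τ s :=
      hslope.eventually (eventually_gt_nhds hDpos)
    have hev' : ∀ᶠ s in 𝓝[<] τ, 0 < slope F τ s :=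
      hev.filter_mono (nhdsWithin_mono τ (fun s hs => ne_of_lt hs))
    have hev2 : ∀ᶠ s in 𝓝[<] τ, s ∈ Set.Ioo t0 τ :=
      Filter.eventually_of_mem (Ioo_mem_nhdsLT_of_mem ⟨hτ0, le_rfl⟩) (fun s hs => hs)
    obtain ⟨s, hs1, hs2⟩ := (hev'.and hev2).exists
    rw [slope_def_field] at hs1
    have hFs : 0 < F s := hmin s hs2.1.le hs2.2
    have hnum : 0 < F s - F τ := by linarith [hτZ.2]
    have hden : s - τ < 0 := by linarith [hs2.2]
    have : (F s - F τ) / (s - τ) < 0 := div_neg_of_pos_of_neg hnum hden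
    linarith
  -- positivity of f on [t0, t1)
  have hmonoAll : StrictMonoOn f (Set.Ico t0 t1) := by
    apply strictMonoOn_of_deriv_pos (convex_Ico _ _) hfc
    intro s hs
    rw [interior_Ico] at hs
    rw [hderiv_eq s hs]
    exact hFpos s (Set.Ioo_subset_Ico_self hs)
  have hfpos : ∀ t ∈ Set.Ico t0 t1, 0 < f t := by
    intro t ht
    rcases eq_or_lt_of_le ht.1 with h | h
    · rw [← h, hft0]; exact hfi
    · have := hmonoAll ⟨le_rfl, ht01⟩ ht h
      rw [hft0] at this; linarith
  -- the nice integrand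
  set h : ℝ → ℝ := fun s => f s * (1 + f s) / (s ^ 2 * F s) with hhdef
  have hhcont : ContinuousOn h (Set.Ico t0 t1) := by
    apply ContinuousOn.div
    · exact hfc.mul (continuousOn_const.add hfc)
    · exact ((continuous_pow 2).continuousOn).mul hFc
    · intro s hs
      exact ne_of_gt (mul_pos (pow_pos (lt_of_lt_of_le ht0 hs.1) 2) (hFpos s hs))
  have hhpos : ∀ s ∈ Set.Ico t0 t1, 0 < h s := by
    intro s hs
    exact div_pos (mul_pos (hfpos s hs) (by linarith [hfpos s hs]))
      (mul_pos (pow_pos (lt_of_lt_of_le ht0 hs.1) 2) (hFpos s hs))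
  -- the integrals agree with those of h
  have hIeq : ∀ x ∈ Set.Ico t0 t1,
      (∫ s in t0..x, f s * (1 + f s) / (s ^ 2 * deriv f s)) = ∫ s in t0..x, h s := by
    intro x hx
    apply intervalIntegral.integral_congr_ae
    apply MeasureTheory.ae_of_all
    intro s hs
    rw [Set.uIoc_of_le hx.1] at hs
    have hsIoo : s ∈ Set.Ioo t0 t1 := ⟨hs.1, lt_of_le_of_lt hs.2 hx.2⟩
    rw [hhdef]
    simp only [hderiv_eq s hsIoo]
  have key : StrictAntiOn g (Set.Ico t0 t1) := by
    intro x hx y hy hxy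
    rw [hg x, hg y, hIeq x hx, hIeq y hy]
    apply Real.exp_lt_exp.2
    have hsub1 : Set.uIcc t0 x ⊆ Set.Ico t0 t1 := by
      rw [Set.uIcc_of_le hx.1]
      exact fun s hs => ⟨hs.1, lt_of_le_of_lt hs.2 hx.2⟩
    have hsub2 : Set.uIcc x y ⊆ Set.Ico t0 t1 := by
      rw [Set.uIcc_of_le hxy.le]
      exact fun s hs => ⟨le_trans hx.1 hs.1, lt_of_le_of_lt hs.2 hy.2⟩
    have hint1 : IntervalIntegrable h volume t0 x := (hhcont.mono hsub1).intervalIntegrable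
    have hint2 : IntervalIntegrable h volume x y := (hhcont.mono hsub2).intervalIntegrable
    have hadd := intervalIntegral.integral_add_adjacent_intervals hint1 hint2
    have hpos : 0 < ∫ s in x..y, h s := by
      apply intervalIntegral.intervalIntegral_pos_of_pos_on hint2 _ hxy
      intro s hs
      exact hhpos s ⟨le_trans hx.1 hs.1.le, lt_trans hs.2 hy.2⟩
    nlinarith [mul_pos hA hpos]
  exact ⟨key, key.injOn⟩
end

section
/- Suppose f ∈ C²([t0,t1)) (with t1 > t0) solves the ODE with the given initial data. Then for every t ∈ (t0,t1) one has (1+f(t))^c̄ < (1+f̊)^c̄·(1 − 𝙴·t0^ā + 𝙴·t^ā). -/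
open Real Set Filter Topology

set_option maxHeartbeats 2000000 in
/-- If `f ∈ C²([t0,t1))` solves the ODE with the given initial data, then
for every `t ∈ (t0,t1)` one has `(1+f(t))^c̄ < (1+f̊)^c̄ (1 − 𝙴 t0^ā + 𝙴 t^ā)`, where
`ā = 1−a`, `c̄ = 1−c` and `𝙴 = c̄ f̊0 t0^(1−ā)/(ā(1+f̊))`. -/
theorem stmt_5
    (t0 t1 a b c fi fi0 abar cbar EE : ℝ) (f : ℝ → ℝ)
    (ht0 : 0 < t0) (ht01 : t0 < t1)
    (ha : 1 < a) (hb : 0 < b) (hc : 1 < c) (hc' : c < 3 / 2)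
    (hfi : 0 < fi) (hfi0 : 0 < fi0)
    (habar : abar = 1 - a) (hcbar : cbar = 1 - c)
    (hEE : EE = cbar * fi0 * t0 ^ (1 - abar) / (abar * (1 + fi)))
    (hreg : ContDiffOn ℝ 2 f (Set.Ico t0 t1))
    (hode : ∀ t ∈ Set.Ico t0 t1,
      deriv (deriv f) t + (a / t) * deriv f t
        - (b / t ^ 2) * f t * (1 + f t)
        - (c / (1 + f t)) * (deriv f t) ^ 2 = 0)
    (hft0 : f t0 = fi) (hft0' : deriv f t0 = fi0) :
    ∀ t ∈ Set.Ioo t0 t1,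
      (1 + f t) ^ cbar < (1 + fi) ^ cbar * (1 - EE * t0 ^ abar + EE * t ^ abar) := by
  have hIoo : Set.Ioo t0 t1 ⊆ Set.Ico t0 t1 := Set.Ioo_subset_Ico_self
  have hfc : ContinuousOn f (Set.Ico t0 t1) := hreg.continuousOn
  have hregIoo : ContDiffOn ℝ 2 f (Set.Ioo t0 t1) := hreg.mono hIoo
  -- first derivative on the open interval
  have hd1 : ∀ s ∈ Set.Ioo t0 t1, HasDerivAt f (deriv f s) s := by
    intro s hs
    exact ((hregIoo.differentiableOn (by norm_num)).differentiableAt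
      (isOpen_Ioo.mem_nhds hs)).hasDerivAt
  -- second derivative on the open interval
  have hd2 : ∀ s ∈ Set.Ioo t0 t1, HasDerivAt (deriv f) (deriv (deriv f) s) s := by
    intro s hs
    have h1 : ContDiffOn ℝ 1 (deriv f) (Set.Ioo t0 t1) :=
      hregIoo.deriv_of_isOpen isOpen_Ioo (by norm_num)
    exact ((h1.differentiableOn (by norm_num)).differentiableAt
      (isOpen_Ioo.mem_nhds hs)).hasDerivAt
  -- `f` is differentiable at `t0` (otherwise `deriv f t0 = 0 ≠ fi0`)
  have hdiff_t0 : DifferentiableAt ℝ f t0 := by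
    by_contra h
    rw [deriv_zero_of_not_differentiableAt h] at hft0'
    exact absurd hft0'.symm (ne_of_gt hfi0)
  -- `deriv f` is continuous on `[t0, t1)`
  have heq : Set.EqOn (derivWithin f (Set.Ico t0 t1)) (deriv f) (Set.Ico t0 t1) := by
    intro s hs
    rcases eq_or_lt_of_le hs.1 with h | h
    · subst h
      exact hdiff_t0.derivWithin ((uniqueDiffOn_Ico t0 t1) _ hs)
    · exact derivWithin_of_mem_nhds (mem_nhds_iff.2 ⟨Set.Ioo t0 t1, hIoo, isOpen_Ioo, ⟨h, hs.2⟩⟩)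
  have hdc : ContinuousOn (deriv f) (Set.Ico t0 t1) :=
    (hreg.continuousOn_derivWithin (uniqueDiffOn_Ico t0 t1) (by norm_num)).congr heq.symm
  -- positivity of `deriv f` on `[t0, t1)`
  have hpos : ∀ s ∈ Set.Ico t0 t1, 0 < deriv f s := by
    by_contra hcon
    push_neg at hcon
    obtain ⟨u, hu, hu0⟩ := hcon
    have hIccu : Set.Icc t0 u ⊆ Set.Ico t0 t1 := fun x hx => ⟨hx.1, lt_of_le_of_lt hx.2 hu.2⟩
    set Z : Set ℝ := Set.Icc t0 u ∩ (deriv f) ⁻¹' Set.Iic 0 with hZdef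
    have hZne : Z.Nonempty := ⟨u, ⟨hu.1, le_refl u⟩, hu0⟩
    have hZcl : IsClosed Z :=
      (hdc.mono hIccu).preimage_isClosed_of_isClosed isClosed_Icc isClosed_Iic
    have hZbd : BddBelow Z := ⟨t0, fun x hx => hx.1.1⟩
    set τ := sInf Z with hτdef
    have hτZ : τ ∈ Z := hZcl.csInf_mem hZne hZbd
    have hτu : τ ≤ u := hτZ.1.2
    have hτ1 : τ < t1 := lt_of_le_of_lt hτu hu.2
    have hτ0' : t0 ≤ τ := hτZ.1.1
    have hτne : τ ≠ t0 := by
      intro h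
      have := hτZ.2
      rw [h, Set.mem_preimage, hft0'] at this
      exact absurd this (not_le.2 hfi0)
    have hτ0 : t0 < τ := lt_of_le_of_ne hτ0' (Ne.symm hτne)
    -- before τ the derivative is positive
    have hmin : ∀ s ∈ Set.Ico t0 τ, 0 < deriv f s := by
      intro s hs
      by_contra h
      push_neg at h
      have : s ∈ Z := ⟨⟨hs.1, le_trans hs.2.le hτu⟩, h⟩
      exact absurd (csInf_le hZbd this) (not_le.2 hs.2)
    -- deriv f τ = 0
    have hge : 0 ≤ deriv f τ := by
      have hcw : ContinuousWithinAt (deriv f) (Set.Ico t0 t1) τ :=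
        (hdc τ ⟨hτ0', hτ1⟩).mono (le_refl _)
      have hmem : Set.Ioo t0 τ ∈ 𝓝[<] τ := Ioo_mem_nhdsLT_of_mem ⟨hτ0, le_refl τ⟩
      have hcw' : ContinuousWithinAt (deriv f) (Set.Iio τ) τ :=
        hcw.mono_of_mem_nhdsWithin (Filter.mem_of_superset hmem (fun x hx => ⟨hx.1.le, hx.2.trans hτ1⟩))
      refine ge_of_tendsto hcw' ?_
      filter_upwards [hmem] with s hs
      exact (hmin s ⟨hs.1.le, hs.2⟩).le
    have hτd0 : deriv f τ = 0 := le_antisymm hτZ.2 hge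
    -- f is increasing up to τ, hence f τ > fi
    have hIccτ : Set.Icc t0 τ ⊆ Set.Ico t0 t1 := fun x hx => ⟨hx.1, lt_of_le_of_lt hx.2 hτ1⟩
    have hfmono : StrictMonoOn f (Set.Icc t0 τ) := by
      refine strictMonoOn_of_deriv_pos (convex_Icc t0 τ) (hfc.mono hIccτ) ?_
      intro x hx
      rw [interior_Icc] at hx
      exact hmin x ⟨hx.1.le, hx.2⟩
    have hfτ : fi < f τ := by
      have := hfmono ⟨le_refl t0, hτ0.le⟩ ⟨hτ0.le, le_refl τ⟩ hτ0
      rwa [hft0] at this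
    have hfτpos : 0 < f τ := lt_trans hfi hfτ
    have h1fτ : 0 < 1 + f τ := by linarith
    -- the ODE gives deriv (deriv f) τ > 0
    have hodeτ := hode τ ⟨hτ0', hτ1⟩
    rw [hτd0] at hodeτ
    have hτpos : 0 < τ := lt_trans ht0 hτ0
    have hDpos : 0 < deriv (deriv f) τ := by
      have hD : deriv (deriv f) τ = (b / τ ^ 2) * f τ * (1 + f τ) := by nlinarith [hodeτ]
      rw [hD]
      positivity
    -- slope contradiction
    have hDτ : HasDerivAt (deriv f) (deriv (deriv f) τ) τ := hd2 τ ⟨hτ0, hτ1⟩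
    have hsl := hasDerivAt_iff_tendsto_slope.mp hDτ
    have hev : ∀ᶠ s in 𝓝[≠] τ, 0 < slope (deriv f) τ s :=
      hsl.eventually (eventually_gt_nhds hDpos)
    have hle : 𝓝[<] τ ≤ 𝓝[≠] τ := nhdsWithin_mono _ (fun s hs => ne_of_lt hs)
    have hev' : ∀ᶠ s in 𝓝[<] τ, 0 < slope (deriv f) τ s := hle hev
    have hmem : Set.Ioo t0 τ ∈ 𝓝[<] τ := Ioo_mem_nhdsLT_of_mem ⟨hτ0, le_refl τ⟩
    have : ∃ s, s ∈ Set.Ioo t0 τ ∧ 0 < slope (deriv f) τ s := by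
      have := hev'.and (Filter.eventually_mem_set.2 hmem)
      rcases this.exists with ⟨s, h1, h2⟩
      exact ⟨s, h2, h1⟩
    obtain ⟨s, hsmem, hslope⟩ := this
    have hslope' : 0 < (deriv f s - deriv f τ) / (s - τ) := by
      rwa [slope_def_field] at hslope
    have hsτ : s - τ < 0 := by linarith [hsmem.2]
    have : deriv f s - deriv f τ < 0 := by
      rcases div_pos_iff.mp hslope' with ⟨h1, h2⟩ | ⟨h1, h2⟩
      · linarith
      · exact h1
    have := hmin s ⟨hsmem.1.le, hsmem.2⟩
    rw [hτd0] at *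
    linarith
  -- monotonicity of f, positivity of 1 + f
  have hfmonoI : StrictMonoOn f (Set.Ico t0 t1) := by
    refine strictMonoOn_of_deriv_pos (convex_Ico t0 t1) hfc ?_
    intro x hx
    rw [interior_Ico] at hx
    exact hpos x (hIoo hx)
  have hflb : ∀ s ∈ Set.Ico t0 t1, fi ≤ f s := by
    intro s hs
    rcases eq_or_lt_of_le hs.1 with h | h
    · rw [← h, hft0]
    · have := hfmonoI ⟨le_refl t0, ht01⟩ hs h
      rw [hft0] at this; exact this.le
  have h1fs : ∀ s ∈ Set.Ico t0 t1, 0 < 1 + f s := by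
    intro s hs; linarith [hflb s hs]
  -- the auxiliary increasing quantity h(s) = s^a (1+f s)^(-c) f'(s)
  set A : ℝ → ℝ := fun s => s ^ a * (1 + f s) ^ (-c) * deriv f s with hAdef
  have hAderiv : ∀ s ∈ Set.Ioo t0 t1,
      HasDerivAt A (s ^ a * (1 + f s) ^ (-c) * ((b / s ^ 2) * f s * (1 + f s))) s := by
    intro s hs
    have hs0 : 0 < s := lt_trans ht0 hs.1
    have hf1 := hd1 s hs
    have hf2 := hd2 s hs
    have h1 : 0 < 1 + f s := h1fs s (hIoo hs)
    have hp : HasDerivAt (fun x : ℝ => x ^ a) (a * s ^ (a - 1)) s :=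
      Real.hasDerivAt_rpow_const (Or.inl hs0.ne')
    have hq : HasDerivAt (fun x => (1 + f x) ^ (-c))
        ((0 + deriv f s) * (-c) * (1 + f s) ^ (-c - 1)) s :=
      ((hasDerivAt_const s (1 : ℝ)).add hf1).rpow_const (Or.inl h1.ne')
    have hA' := (hp.mul hq).mul hf2
    refine hA'.congr_deriv ?_
    simp only [Pi.mul_apply]
    symm
    have hodes := hode s (hIoo hs)
    have hf'' : deriv (deriv f) s
        = (b / s ^ 2) * f s * (1 + f s) + (c / (1 + f s)) * (deriv f s) ^ 2
          - (a / s) * deriv f s := by linarith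
    rw [hf'']
    have e1 : s ^ (a - 1) = s ^ a / s := by
      rw [Real.rpow_sub hs0, Real.rpow_one]
    have e2 : (1 + f s) ^ (-c - 1) = (1 + f s) ^ (-c) / (1 + f s) := by
      rw [Real.rpow_sub h1, Real.rpow_one]
    rw [e1, e2]
    field_simp
    ring
  -- now fix t and work on [t0, t]
  intro t ht
  have htt1 : Set.Icc t0 t ⊆ Set.Ico t0 t1 := fun x hx => ⟨hx.1, lt_of_le_of_lt hx.2 ht.2⟩
  have hAcont : ContinuousOn A (Set.Icc t0 t) := by
    refine ContinuousOn.mul (ContinuousOn.mul ?_ ?_) (hdc.mono htt1)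
    · exact continuousOn_id.rpow_const (fun x hx => Or.inl (ne_of_gt (lt_of_lt_of_le ht0 hx.1)))
    · exact (continuousOn_const.add (hfc.mono htt1)).rpow_const
        (fun x hx => Or.inl (ne_of_gt (h1fs x (htt1 hx))))
  have hAmono : StrictMonoOn A (Set.Icc t0 t) := by
    refine strictMonoOn_of_deriv_pos (convex_Icc t0 t) hAcont ?_
    intro x hx
    rw [interior_Icc] at hx
    have hxI : x ∈ Set.Ioo t0 t1 := ⟨hx.1, lt_trans hx.2 ht.2⟩
    rw [(hAderiv x hxI).deriv]
    have hx0 : 0 < x := lt_trans ht0 hxI.1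
    have h1 : 0 < 1 + f x := h1fs x (hIoo hxI)
    have hfx : 0 < f x := lt_of_lt_of_le hfi (hflb x (hIoo hxI))
    have := Real.rpow_pos_of_pos hx0 a
    have := Real.rpow_pos_of_pos h1 (-c)
    positivity
  set K : ℝ := t0 ^ a * (1 + fi) ^ (-c) * fi0 with hKdef
  have hAt0 : A t0 = K := by
    rw [hAdef]; simp only []; rw [hft0, hft0']
  have hKlt : ∀ s ∈ Set.Ioc t0 t, K < A s := by
    intro s hs
    rw [← hAt0]
    exact hAmono ⟨le_refl t0, le_trans hs.1.le hs.2⟩ ⟨hs.1.le, hs.2⟩ hs.1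
  -- comparison function G
  set G : ℝ → ℝ := fun s => (1 + f s) ^ cbar - cbar * K / abar * s ^ abar with hGdef
  have habar0 : abar < 0 := by rw [habar]; linarith
  have hcbar0 : cbar < 0 := by rw [hcbar]; linarith
  have hGanti : StrictAntiOn G (Set.Icc t0 t) := by
    refine strictAntiOn_of_deriv_neg (convex_Icc t0 t) ?_ ?_
    · refine ContinuousOn.sub ?_ (ContinuousOn.mul continuousOn_const ?_)
      · exact (continuousOn_const.add (hfc.mono htt1)).rpow_const
          (fun x hx => Or.inl (ne_of_gt (h1fs x (htt1 hx))))
      · exact continuousOn_id.rpow_const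
          (fun x hx => Or.inl (ne_of_gt (lt_of_lt_of_le ht0 hx.1)))
    · intro x hx
      rw [interior_Icc] at hx
      have hxI : x ∈ Set.Ioo t0 t1 := ⟨hx.1, lt_trans hx.2 ht.2⟩
      have hx0 : 0 < x := lt_trans ht0 hxI.1
      have h1 : 0 < 1 + f x := h1fs x (hIoo hxI)
      have hg1 : HasDerivAt (fun s => (1 + f s) ^ cbar)
          ((0 + deriv f x) * cbar * (1 + f x) ^ (cbar - 1)) x :=
        ((hasDerivAt_const x (1 : ℝ)).add (hd1 x hxI)).rpow_const (Or.inl h1.ne')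
      have hg2 : HasDerivAt (fun s : ℝ => cbar * K / abar * s ^ abar)
          (cbar * K / abar * (abar * x ^ (abar - 1))) x :=
        (Real.hasDerivAt_rpow_const (Or.inl hx0.ne')).const_mul _
      have hG' : HasDerivAt G
          ((0 + deriv f x) * cbar * (1 + f x) ^ (cbar - 1)
            - cbar * K / abar * (abar * x ^ (abar - 1))) x := hg1.sub hg2
      rw [hG'.deriv]
      -- show it is negative
      have hKA : K < A x := hKlt x ⟨hx.1, hx.2.le⟩
      have e1 : (1 + f x) ^ (cbar - 1) = (1 + f x) ^ (-c) := by
        rw [hcbar]; norm_num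
      have e2 : x ^ (abar - 1) = x ^ (-a) := by
        rw [habar]; norm_num
      have e3 : x ^ (-a) = (x ^ a)⁻¹ := Real.rpow_neg hx0.le a
      have habarne : abar ≠ 0 := ne_of_lt habar0
      rw [e1, e2, e3]
      have hxa : 0 < x ^ a := Real.rpow_pos_of_pos hx0 a
      rw [hAdef] at hKA
      simp only [] at hKA
      -- goal: (0 + f') * cbar * (1+f)^(-c) - cbar*K/abar*(abar * (x^a)⁻¹) < 0
      have key : K * (x ^ a)⁻¹ < deriv f x * (1 + f x) ^ (-c) := by
        rw [inv_eq_one_div, ← div_eq_mul_one_div, div_lt_iff₀ hxa]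
        nlinarith [hKA]
      have hsimp : cbar * K / abar * (abar * (x ^ a)⁻¹) = cbar * (K * (x ^ a)⁻¹) := by
        field_simp
      rw [hsimp]
      have := mul_lt_mul_of_neg_left key hcbar0
      nlinarith [this]
  -- conclude
  have hGlt : G t < G t0 := hGanti ⟨le_refl t0, ht.1.le⟩ ⟨ht.1.le, le_refl t⟩ ht.1
  rw [hGdef] at hGlt
  simp only [] at hGlt
  rw [hft0] at hGlt
  -- identify constants
  have hEKey : cbar * K / abar = (1 + fi) ^ cbar * EE := by
    have h1fi : 0 < 1 + fi := by linarith
    have e4 : (1 : ℝ) - abar = a := by rw [habar]; ring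
    rw [hEE, e4, hKdef]
    have e5 : (1 + fi) ^ (-c) = (1 + fi) ^ cbar / (1 + fi) := by
      rw [show (-c : ℝ) = cbar - 1 by rw [hcbar]; ring, Real.rpow_sub h1fi, Real.rpow_one]
    rw [e5]
    field_simp
  rw [hEKey] at hGlt
  nlinarith [hGlt]
end

section
/- Suppose f ∈ C²([t0,t1)) (with t1 > t0) solves the ODE with the given initial data. Then for every t ∈ (t0,t1) one has 𝙰·t^((ā−△)/2) + 𝙱·t^((ā+△)/2) + 1 < (1+f(t))^(−1). -/
set_option maxHeartbeats 1000000
open Real Set Topology Filter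

lemma aux1 (t0 t1 : ℝ) (F F' : ℝ → ℝ)
    (hcF : ContinuousOn F (Ico t0 t1))
    (hF0 : 0 < F t0)
    (hdiff : ∀ t ∈ Ioo t0 t1, HasDerivAt F (F' t) t)
    (hcrit : ∀ m ∈ Ioo t0 t1, (∀ s ∈ Ico t0 m, 0 < F s) → F m = 0 → 0 < F' m) :
    ∀ t ∈ Ico t0 t1, 0 < F t := by
  intro τ hτ
  rcases eq_or_lt_of_le hτ.1 with heq | hτ0
  · exact heq ▸ hF0
  -- τ ∈ Ioo t0 t1
  set A : Set ℝ := {x ∈ Icc t0 τ | ∀ s ∈ Icc t0 x, 0 < F s} with hA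
  have ht0A : t0 ∈ A := by
    refine ⟨⟨le_rfl, le_of_lt hτ0⟩, ?_⟩
    intro s hs
    have : s = t0 := le_antisymm hs.2 hs.1
    simpa [this] using hF0
  have hAne : A.Nonempty := ⟨t0, ht0A⟩
  have hAbdd : BddAbove A := ⟨τ, fun x hx => hx.1.2⟩
  set m := sSup A with hm
  have hmτ : m ≤ τ := csSup_le hAne (fun x hx => hx.1.2)
  have ht0m : t0 ≤ m := le_csSup hAbdd ht0A
  have hmt1 : m < t1 := lt_of_le_of_lt hmτ hτ.2
  have hlt : ∀ s ∈ Ico t0 m, 0 < F s := by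
    intro s hs
    obtain ⟨x, hxA, hsx⟩ := exists_lt_of_lt_csSup hAne hs.2
    exact hxA.2 s ⟨hs.1, le_of_lt hsx⟩
  have hFm : 0 < F m := by
    rcases eq_or_lt_of_le ht0m with heq | ht0m'
    · exact heq ▸ hF0
    by_contra hle
    push_neg at hle
    have hmIoo : m ∈ Ioo t0 t1 := ⟨ht0m', hmt1⟩
    have hne : (𝓝[Ioo t0 m] m).NeBot := right_nhdsWithin_Ioo_neBot ht0m'
    have htend : Filter.Tendsto F (𝓝[Ioo t0 m] m) (𝓝 (F m)) :=
      (hcF m ⟨ht0m, hmt1⟩).mono_left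
        (nhdsWithin_mono m (fun s hs => ⟨le_of_lt hs.1, lt_trans hs.2 hmt1⟩))
    have hge : 0 ≤ F m := by
      refine ge_of_tendsto htend ?_
      filter_upwards [self_mem_nhdsWithin] with s hs
      exact le_of_lt (hlt s ⟨le_of_lt hs.1, hs.2⟩)
    have hFm0 : F m = 0 := le_antisymm hle hge
    have hFd : 0 < F' m := hcrit m hmIoo hlt hFm0
    -- slope from the left is ≤ 0
    have hslope : Filter.Tendsto (slope F m) (𝓝[Ioo t0 m] m) (𝓝 (F' m)) := by
      have := hasDerivAt_iff_tendsto_slope.mp (hdiff m hmIoo)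
      exact this.mono_left (nhdsWithin_mono m (fun s hs => ne_of_lt hs.2))
    have : F' m ≤ 0 := by
      refine le_of_tendsto hslope ?_
      filter_upwards [self_mem_nhdsWithin] with s hs
      have h1 : 0 < F s := hlt s ⟨le_of_lt hs.1, hs.2⟩
      have h2 : s - m < 0 := sub_neg.mpr hs.2
      rw [slope_def_field, hFm0]
      exact le_of_lt (div_neg_of_pos_of_neg (by linarith) h2)
    linarith
  have hmA : m ∈ A := by
    refine ⟨⟨ht0m, hmτ⟩, ?_⟩
    intro s hs
    rcases eq_or_lt_of_le hs.2 with rfl | hsm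
    · exact hFm
    · exact hlt s ⟨hs.1, hsm⟩
  have hmeq : m = τ := by
    by_contra hne
    have hmτ' : m < τ := lt_of_le_of_ne hmτ hne
    have hev : ∀ᶠ s in 𝓝[Ico t0 t1] m, 0 < F s :=
      (hcF m ⟨ht0m, hmt1⟩).eventually (eventually_gt_nhds hFm)
    rw [eventually_nhdsWithin_iff, Metric.eventually_nhds_iff] at hev
    obtain ⟨ε, hε, hball⟩ := hev
    set m' := min (m + ε / 2) τ with hm'
    have hmm' : m < m' := lt_min (by linarith) hmτ'
    have hm'A : m' ∈ A := by
      refine ⟨⟨le_trans ht0m (le_of_lt hmm'), min_le_right _ _⟩, ?_⟩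
      intro s hs
      rcases le_or_gt s m with hsm | hsm
      · exact hmA.2 s ⟨hs.1, hsm⟩
      · refine hball ?_ ⟨le_trans ht0m (le_of_lt hsm), lt_of_le_of_lt (le_trans hs.2 (min_le_right _ _)) hτ.2⟩
        have : s ≤ m + ε / 2 := le_trans hs.2 (min_le_left _ _)
        rw [Real.dist_eq, abs_of_pos (by linarith)]
        linarith
    have := le_csSup hAbdd hm'A
    rw [← hm] at this
    linarith
  exact hmA.2 τ ⟨hτ.1, by rw [hmeq]⟩

lemma aux2 (t0 t1 aa : ℝ) (ht0 : 0 < t0) (ht01 : t0 < t1)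
    (w w1 R : ℝ → ℝ)
    (hw0 : w t0 = 0) (hw10 : w1 t0 = 0)
    (hwc : ContinuousOn w (Ico t0 t1))
    (hw1c : ContinuousOn w1 (Ico t0 t1))
    (hw : ∀ t ∈ Ioo t0 t1, HasDerivAt w (w1 t) t)
    (hE : ∀ t ∈ Ioo t0 t1, HasDerivAt (fun s => s ^ aa * w1 s) (R t) t)
    (hRc : ContinuousOn R (Ico t0 t1))
    (hR0 : 0 < R t0)
    (hRw : ∀ t ∈ Ioo t0 t1, 0 < w t → 0 < R t) :
    ∀ t ∈ Ioo t0 t1, 0 < w t := by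
  intro τ hτ
  set E : ℝ → ℝ := fun s => s ^ aa * w1 s with hEdef
  have hE0 : E t0 = 0 := by simp [hEdef, hw10]
  have hEc : ContinuousOn E (Ico t0 t1) := by
    apply ContinuousOn.mul ?_ hw1c
    exact ContinuousOn.rpow_const continuousOn_id
      (fun x hx => Or.inl (ne_of_gt (lt_of_lt_of_le ht0 hx.1)))
  -- core monotonicity step:
  -- if R > 0 on the open interval (t0, x) (x ≤ τ) then w, w1 > 0 on (t0, x]
  have key : ∀ x, t0 < x → x ≤ τ → (∀ s ∈ Ioo t0 x, 0 < R s) →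
      ∀ s ∈ Ioc t0 x, 0 < w s := by
    intro x hx1 hx2 hRpos
    have hsub : Icc t0 x ⊆ Ico t0 t1 := fun s hs =>
      ⟨hs.1, lt_of_le_of_lt (le_trans hs.2 hx2) hτ.2⟩
    have hEmono : StrictMonoOn E (Icc t0 x) := by
      apply strictMonoOn_of_deriv_pos (convex_Icc t0 x) (hEc.mono hsub)
      intro s hs
      rw [interior_Icc] at hs
      have hsIoo : s ∈ Ioo t0 t1 := ⟨hs.1, lt_of_le_of_lt (le_trans (le_of_lt hs.2) hx2) hτ.2⟩
      rw [(hE s hsIoo).deriv]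
      exact hRpos s hs
    have hEpos : ∀ s ∈ Ioc t0 x, 0 < E s := by
      intro s hs
      have := hEmono (left_mem_Icc.mpr (le_trans (le_of_lt hx1) le_rfl))
        ⟨le_of_lt hs.1, hs.2⟩ hs.1
      rwa [hE0] at this
    have hw1pos : ∀ s ∈ Ioc t0 x, 0 < w1 s := by
      intro s hs
      have hs0 : 0 < s := lt_trans ht0 hs.1
      have := hEpos s hs
      simp only [hEdef] at this
      have hp : 0 < s ^ aa := rpow_pos_of_pos hs0 aa
      nlinarith [this]
    have hwmono : StrictMonoOn w (Icc t0 x) := by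
      apply strictMonoOn_of_deriv_pos (convex_Icc t0 x) (hwc.mono hsub)
      intro s hs
      rw [interior_Icc] at hs
      have hsIoo : s ∈ Ioo t0 t1 := ⟨hs.1, lt_of_le_of_lt (le_trans (le_of_lt hs.2) hx2) hτ.2⟩
      rw [(hw s hsIoo).deriv]
      exact hw1pos s ⟨hs.1, le_of_lt hs.2⟩
    intro s hs
    have := hwmono (left_mem_Icc.mpr (le_trans (le_of_lt hx1) le_rfl))
      ⟨le_of_lt hs.1, hs.2⟩ hs.1
    rwa [hw0] at this
  -- initial window where R > 0 from continuity
  have hev : ∀ᶠ s in 𝓝[Ico t0 t1] t0, 0 < R s :=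
    (hRc t0 ⟨le_rfl, ht01⟩).eventually (eventually_gt_nhds hR0)
  rw [eventually_nhdsWithin_iff, Metric.eventually_nhds_iff] at hev
  obtain ⟨ε, hε, hball⟩ := hev
  set u := min (t0 + ε / 2) ((t0 + τ) / 2) with hu
  have hut0 : t0 < u := lt_min (by linarith) (by cases hτ with | intro h1 h2 => linarith)
  have huτ : u < τ := lt_of_le_of_lt (min_le_right _ _) (by cases hτ with | intro h1 h2 => linarith)
  have hwindow : ∀ s ∈ Ioo t0 u, 0 < R s := by
    intro s hs
    refine hball ?_ ⟨le_of_lt hs.1, lt_trans (lt_trans hs.2 huτ) hτ.2⟩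
    rw [Real.dist_eq, abs_of_pos (by linarith [hs.1])]
    have : s < t0 + ε / 2 := lt_of_lt_of_le hs.2 (min_le_left _ _)
    linarith
  have huA : ∀ s ∈ Ioc t0 u, 0 < w s := key u hut0 (le_of_lt huτ) hwindow
  -- continuous induction via sSup
  set A : Set ℝ := {x ∈ Icc u τ | ∀ s ∈ Ioc t0 x, 0 < w s} with hA
  have huA' : u ∈ A := ⟨⟨le_rfl, le_of_lt huτ⟩, huA⟩
  have hAne : A.Nonempty := ⟨u, huA'⟩
  have hAbdd : BddAbove A := ⟨τ, fun x hx => hx.1.2⟩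
  set m := sSup A with hm
  have hum : u ≤ m := le_csSup hAbdd huA'
  have hmτ : m ≤ τ := csSup_le hAne (fun x hx => hx.1.2)
  have ht0m : t0 < m := lt_of_lt_of_le hut0 hum
  have hlt : ∀ s ∈ Ioo t0 m, 0 < w s := by
    intro s hs
    rcases le_or_gt s u with hsu | hsu
    · exact huA s ⟨hs.1, hsu⟩
    · obtain ⟨x, hxA, hsx⟩ := exists_lt_of_lt_csSup hAne hs.2
      exact hxA.2 s ⟨hs.1, le_of_lt hsx⟩
  have hRm : ∀ s ∈ Ioo t0 m, 0 < R s := by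
    intro s hs
    have hsIoo : s ∈ Ioo t0 t1 := ⟨hs.1, lt_of_lt_of_le (lt_of_lt_of_le hs.2 hmτ) (le_of_lt hτ.2)⟩
    exact hRw s hsIoo (hlt s hs)
  have hwm : 0 < w m := key m ht0m hmτ hRm m ⟨ht0m, le_rfl⟩
  have hmA : m ∈ A := by
    refine ⟨⟨hum, hmτ⟩, ?_⟩
    intro s hs
    rcases eq_or_lt_of_le hs.2 with heq | hsm
    · exact heq ▸ hwm
    · exact hlt s ⟨hs.1, hsm⟩
  have hmeq : m = τ := by
    by_contra hne
    have hmτ' : m < τ := lt_of_le_of_ne hmτ hne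
    have hmIco : m ∈ Ico t0 t1 := ⟨le_of_lt ht0m, lt_trans hmτ' hτ.2⟩
    have hev2 : ∀ᶠ s in 𝓝[Ico t0 t1] m, 0 < w s :=
      (hwc m hmIco).eventually (eventually_gt_nhds hwm)
    rw [eventually_nhdsWithin_iff, Metric.eventually_nhds_iff] at hev2
    obtain ⟨ε', hε', hball'⟩ := hev2
    set m' := min (m + ε' / 2) τ with hm'
    have hmm' : m < m' := lt_min (by linarith) hmτ'
    have hm'A : m' ∈ A := by
      refine ⟨⟨le_trans hum (le_of_lt hmm'), min_le_right _ _⟩, ?_⟩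
      intro s hs
      rcases le_or_gt s m with hsm | hsm
      · exact hmA.2 s ⟨hs.1, hsm⟩
      · refine hball' ?_ ⟨le_trans (le_of_lt ht0m) (le_of_lt hsm),
          lt_of_le_of_lt (le_trans hs.2 (min_le_right _ _)) hτ.2⟩
        have : s ≤ m + ε' / 2 := le_trans hs.2 (min_le_left _ _)
        rw [Real.dist_eq, abs_of_pos (by linarith)]
        linarith
    have := le_csSup hAbdd hm'A
    rw [← hm] at this
    linarith
  exact hmA.2 τ ⟨hτ.1, by rw [hmeq]⟩

/-- If `f ∈ C²([t0,t1))` solves the ODE with the given initial data, then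
for every `t ∈ (t0,t1)` one has `𝙰 t^((ā−△)/2) + 𝙱 t^((ā+△)/2) + 1 < (1+f(t))⁻¹`. -/
theorem stmt_6
    (t0 t1 a b c fi fi0 abar delta AA BB : ℝ) (f : ℝ → ℝ)
    (ht0 : 0 < t0) (ht01 : t0 < t1)
    (ha : 1 < a) (hb : 0 < b) (hc : 1 < c) (hc' : c < 3 / 2)
    (hfi : 0 < fi) (hfi0 : 0 < fi0)
    (habar : abar = 1 - a)
    (hdelta : delta = Real.sqrt ((1 - a) ^ 2 + 4 * b))
    (hAA : AA = t0 ^ (-((abar - delta) / 2)) / delta *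
      (t0 * fi0 / (1 + fi) ^ 2 - (abar + delta) / 2 * (fi / (1 + fi))))
    (hBB : BB = t0 ^ (-((abar + delta) / 2)) / delta *
      ((abar - delta) / 2 * (fi / (1 + fi)) - t0 * fi0 / (1 + fi) ^ 2))
    (hreg : ContDiffOn ℝ 2 f (Set.Ico t0 t1))
    (hode : ∀ t ∈ Set.Ico t0 t1,
      deriv (deriv f) t + (a / t) * deriv f t
        - (b / t ^ 2) * f t * (1 + f t)
        - (c / (1 + f t)) * (deriv f t) ^ 2 = 0)
    (hft0 : f t0 = fi) (hft0' : deriv f t0 = fi0) :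
    ∀ t ∈ Set.Ioo t0 t1,
      AA * t ^ ((abar - delta) / 2) + BB * t ^ ((abar + delta) / 2) + 1 < (1 + f t)⁻¹ := by
  -- basic quantities
  have habn : 0 < (1 - a) ^ 2 + 4 * b := by nlinarith
  have hdpos : 0 < delta := hdelta ▸ Real.sqrt_pos.mpr habn
  have hd2 : delta ^ 2 = (1 - a) ^ 2 + 4 * b := by
    rw [hdelta]; exact Real.sq_sqrt (le_of_lt habn)
  set lam1 := (abar - delta) / 2 with hlam1
  set lam2 := (abar + delta) / 2 with hlam2
  have hr1 : lam1 ^ 2 + (a - 1) * lam1 - b = 0 := by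
    rw [hlam1, habar]; nlinarith [hd2]
  have hr2 : lam2 ^ 2 + (a - 1) * lam2 - b = 0 := by
    rw [hlam2, habar]; nlinarith [hd2]
  have hlamdiff : lam1 - lam2 = -delta := by rw [hlam1, hlam2]; ring
  have hfine : (1 : ℝ) + fi ≠ 0 := by positivity
  -- derivative bookkeeping
  set F := derivWithin f (Ico t0 t1) with hFdef
  have hud : UniqueDiffOn ℝ (Ico t0 t1) := uniqueDiffOn_Ico t0 t1
  have hfd : DifferentiableOn ℝ f (Ico t0 t1) := hreg.differentiableOn (by norm_num)
  have hF1 : ContDiffOn ℝ 1 F (Ico t0 t1) := hreg.derivWithin hud (by norm_num)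
  have hFc : ContinuousOn F (Ico t0 t1) := hF1.continuousOn
  have hFdiff : DifferentiableOn ℝ F (Ico t0 t1) := hF1.differentiableOn (by norm_num)
  have hmem : ∀ t ∈ Ioo t0 t1, Ico t0 t1 ∈ 𝓝 t := fun t ht =>
    Filter.mem_of_superset (isOpen_Ioo.mem_nhds ht) Ioo_subset_Ico_self
  have hFeq : ∀ t ∈ Ioo t0 t1, deriv f t = F t := fun t ht =>
    (derivWithin_of_mem_nhds (hmem t ht)).symm
  have hfD : ∀ t ∈ Ioo t0 t1, HasDerivAt f (F t) t := by
    intro t ht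
    have := ((hfd t (Ioo_subset_Ico_self ht)).differentiableAt (hmem t ht)).hasDerivAt
    rwa [hFeq t ht] at this
  have hFD : ∀ t ∈ Ioo t0 t1, HasDerivAt F (deriv F t) t := fun t ht =>
    ((hFdiff t (Ioo_subset_Ico_self ht)).differentiableAt (hmem t ht)).hasDerivAt
  have hFF : ∀ t ∈ Ioo t0 t1, deriv (deriv f) t = deriv F t := by
    intro t ht
    apply Filter.EventuallyEq.deriv_eq
    filter_upwards [isOpen_Ioo.mem_nhds ht] with s hs
    exact hFeq s hs
  have hF0 : F t0 = fi0 := by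
    have hdf : DifferentiableAt ℝ f t0 :=
      differentiableAt_of_deriv_ne_zero (hft0' ▸ ne_of_gt hfi0)
    rw [hFdef, hdf.derivWithin (hud t0 ⟨le_rfl, ht01⟩), hft0']
  have hode' : ∀ t ∈ Ioo t0 t1, deriv F t
      = -((a / t) * F t) + (b / t ^ 2) * f t * (1 + f t) + (c / (1 + f t)) * F t ^ 2 := by
    intro t ht
    have h1 := hode t (Ioo_subset_Ico_self ht)
    rw [hFF t ht, hFeq t ht] at h1
    linarith
  -- positivity of F
  have hcrit : ∀ m ∈ Ioo t0 t1, (∀ s ∈ Ico t0 m, 0 < F s) → F m = 0 → 0 < deriv F m := by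
    intro m hm hpos hFm
    have hsub : Icc t0 m ⊆ Ico t0 t1 := fun s hs => ⟨hs.1, lt_of_le_of_lt hs.2 hm.2⟩
    have hfmono : StrictMonoOn f (Icc t0 m) := by
      apply strictMonoOn_of_deriv_pos (convex_Icc _ _) (hreg.continuousOn.mono hsub)
      intro s hs
      rw [interior_Icc] at hs
      have hsIoo : s ∈ Ioo t0 t1 := ⟨hs.1, lt_trans hs.2 hm.2⟩
      rw [hFeq s hsIoo]
      exact hpos s ⟨le_of_lt hs.1, hs.2⟩
    have hfm : fi < f m := by
      have := hfmono ⟨le_rfl, le_of_lt hm.1⟩ ⟨le_of_lt hm.1, le_rfl⟩ hm.1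
      rwa [hft0] at this
    have hm0 : 0 < m := lt_trans ht0 hm.1
    have h2 := hode' m hm
    rw [hFm] at h2
    have e1 : 0 < b / m ^ 2 * f m * (1 + f m) := by
      apply mul_pos (mul_pos (div_pos hb (by positivity)) (by linarith)) (by linarith)
    have e0 : -((a / m) * (0:ℝ)) + b / m ^ 2 * f m * (1 + f m) + c / (1 + f m) * (0:ℝ) ^ 2
        = b / m ^ 2 * f m * (1 + f m) := by ring
    rw [h2, e0]; exact e1
  have hFpos : ∀ t ∈ Ico t0 t1, 0 < F t :=
    aux1 t0 t1 F (deriv F) hFc (hF0 ▸ hfi0) hFD hcrit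
  -- f ≥ fi and 1 + f > 0
  have hfge : ∀ s ∈ Ico t0 t1, fi ≤ f s := by
    intro s hs
    rcases eq_or_lt_of_le hs.1 with heq | h
    · rw [← heq, hft0]
    · have hsub : Icc t0 s ⊆ Ico t0 t1 := fun u hu => ⟨hu.1, lt_of_le_of_lt hu.2 hs.2⟩
      have hfmono : StrictMonoOn f (Icc t0 s) := by
        apply strictMonoOn_of_deriv_pos (convex_Icc _ _) (hreg.continuousOn.mono hsub)
        intro u hu
        rw [interior_Icc] at hu
        have huIoo : u ∈ Ioo t0 t1 := ⟨hu.1, lt_trans hu.2 hs.2⟩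
        rw [hFeq u huIoo]
        exact hFpos u (Ioo_subset_Ico_self huIoo)
      have := hfmono ⟨le_rfl, le_of_lt h⟩ ⟨le_of_lt h, le_rfl⟩ h
      rw [hft0] at this
      linarith
  have hSpos : ∀ s ∈ Ico t0 t1, 0 < 1 + f s := fun s hs => by linarith [hfge s hs]
  -- the comparison functions
  set V : ℝ → ℝ := fun t => -(AA * t ^ lam1 + BB * t ^ lam2) with hV
  set V1 : ℝ → ℝ := fun t => -(AA * lam1 * t ^ (lam1 - 1) + BB * lam2 * t ^ (lam2 - 1)) with hV1
  set V2 : ℝ → ℝ := fun t =>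
    -(AA * lam1 * (lam1 - 1) * t ^ (lam1 - 2) + BB * lam2 * (lam2 - 1) * t ^ (lam2 - 2)) with hV2
  set w : ℝ → ℝ := fun t => V t - (1 - (1 + f t)⁻¹) with hw
  set w1 : ℝ → ℝ := fun t => V1 t - F t / (1 + f t) ^ 2 with hw1
  set R : ℝ → ℝ := fun t => t ^ a * (b / t ^ 2 * w t + (2 - c) * F t ^ 2 / (1 + f t) ^ 3) with hR
  have hrp : ∀ (p : ℝ) (t : ℝ), 0 < t → HasDerivAt (fun s : ℝ => s ^ p) (p * t ^ (p - 1)) t :=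
    fun p t ht => Real.hasDerivAt_rpow_const (Or.inl (ne_of_gt ht))
  -- derivative of V
  have hVd : ∀ t, 0 < t → HasDerivAt V (V1 t) t := by
    intro t ht
    have h3 := (((hrp lam1 t ht).const_mul AA).add ((hrp lam2 t ht).const_mul BB)).neg
    simp only [hV, hV1]
    refine h3.congr_deriv (Eq.symm ?_)
    ring
  have hV1d : ∀ t, 0 < t → HasDerivAt V1 (V2 t) t := by
    intro t ht
    have h3 := (((hrp (lam1 - 1) t ht).const_mul (AA * lam1)).add
      ((hrp (lam2 - 1) t ht).const_mul (BB * lam2))).neg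
    rw [show lam1 - 1 - 1 = lam1 - 2 by ring, show lam2 - 1 - 1 = lam2 - 2 by ring] at h3
    simp only [hV1, hV2]
    refine h3.congr_deriv (Eq.symm ?_)
    ring
  -- rpow shift identities
  have hshift : ∀ (p : ℝ) (t : ℝ), t ≠ 0 → t ^ (p - 1) * t = t ^ p := by
    intro p t htne
    rw [← Real.rpow_add_one htne (p - 1)]
    norm_num
  have hshift2 : ∀ (p : ℝ) (t : ℝ), t ≠ 0 → t ^ (p - 2) * t = t ^ (p - 1) := by
    intro p t htne
    rw [← Real.rpow_add_one htne (p - 2)]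
    congr 1
    ring
  -- the linear ODE satisfied by V
  have hVodeM : ∀ t : ℝ, 0 < t → t ^ 2 * V2 t = b * V t - a * t * V1 t := by
    intro t ht
    have htne : t ≠ 0 := ne_of_gt ht
    simp only [hV, hV1, hV2]
    linear_combination (-(AA * t ^ lam1)) * hr1 + (-(BB * t ^ lam2)) * hr2
      + (-(AA * lam1 * (lam1 - 1 + a))) * hshift lam1 t htne
      + (-(AA * lam1 * (lam1 - 1) * t)) * hshift2 lam1 t htne
      + (-(BB * lam2 * (lam2 - 1 + a))) * hshift lam2 t htne
      + (-(BB * lam2 * (lam2 - 1) * t)) * hshift2 lam2 t htne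
  have hVode : ∀ t : ℝ, 0 < t → V2 t = (b * V t - a * t * V1 t) / t ^ 2 := by
    intro t ht
    rw [eq_div_iff (by positivity : (t:ℝ) ^ 2 ≠ 0)]
    linear_combination hVodeM t ht
  -- initial values
  have key1 : AA * t0 ^ lam1 + BB * t0 ^ lam2 = -(fi / (1 + fi)) := by
    rw [hAA, hBB, Real.rpow_neg (le_of_lt ht0), Real.rpow_neg (le_of_lt ht0)]
    have hX : (0:ℝ) < t0 ^ lam1 := rpow_pos_of_pos ht0 _
    have hY : (0:ℝ) < t0 ^ lam2 := rpow_pos_of_pos ht0 _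
    field_simp
    linear_combination (fi * t0 ^ lam1 * t0 ^ lam2 * (1 + fi)) * hlamdiff
  have key2 : AA * lam1 * t0 ^ (lam1 - 1) + BB * lam2 * t0 ^ (lam2 - 1)
      = -(fi0 / (1 + fi) ^ 2) := by
    rw [hAA, hBB, Real.rpow_neg (le_of_lt ht0), Real.rpow_neg (le_of_lt ht0),
      rpow_sub ht0, rpow_sub ht0, rpow_one]
    have hX : (0:ℝ) < t0 ^ lam1 := rpow_pos_of_pos ht0 _
    have hY : (0:ℝ) < t0 ^ lam2 := rpow_pos_of_pos ht0 _
    field_simp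
    linear_combination (fi0 * t0 * t0 ^ lam1 * t0 ^ lam2) * hlamdiff
  have hw0 : w t0 = 0 := by
    simp only [hw, hV, hft0]
    rw [key1]
    field_simp
    ring
  have hw10 : w1 t0 = 0 := by
    simp only [hw1, hV1, hF0, hft0]
    rw [key2]
    field_simp
    ring
  -- continuity
  have hcrpow : ∀ p : ℝ, ContinuousOn (fun s : ℝ => s ^ p) (Ico t0 t1) := fun p =>
    ContinuousOn.rpow_const continuousOn_id
      (fun x hx => Or.inl (ne_of_gt (lt_of_lt_of_le ht0 hx.1)))
  have hSc : ContinuousOn (fun s => 1 + f s) (Ico t0 t1) :=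
    continuousOn_const.add hreg.continuousOn
  have hSne : ∀ x ∈ Ico t0 t1, 1 + f x ≠ 0 := fun x hx => ne_of_gt (hSpos x hx)
  have hVc : ContinuousOn V (Ico t0 t1) := by
    simp only [hV]
    exact ((continuousOn_const.mul (hcrpow lam1)).add
      (continuousOn_const.mul (hcrpow lam2))).neg
  have hV1c : ContinuousOn V1 (Ico t0 t1) := by
    simp only [hV1]
    exact ((continuousOn_const.mul (hcrpow (lam1 - 1))).add
      (continuousOn_const.mul (hcrpow (lam2 - 1)))).neg
  have hwc : ContinuousOn w (Ico t0 t1) := by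
    simp only [hw]
    exact hVc.sub (continuousOn_const.sub (hSc.inv₀ hSne))
  have hw1c : ContinuousOn w1 (Ico t0 t1) := by
    simp only [hw1]
    exact hV1c.sub (hFc.div (hSc.pow 2) (fun x hx => pow_ne_zero 2 (hSne x hx)))
  have hRc : ContinuousOn R (Ico t0 t1) := by
    simp only [hR]
    apply ContinuousOn.mul (hcrpow a)
    apply ContinuousOn.add
    · exact (continuousOn_const.div (continuousOn_id.pow 2)
        (fun x hx => pow_ne_zero 2 (ne_of_gt (lt_of_lt_of_le ht0 hx.1)))).mul hwc
    · exact (continuousOn_const.mul (hFc.pow 2)).div (hSc.pow 3)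
        (fun x hx => pow_ne_zero 3 (hSne x hx))
  -- derivative of w
  have hwd : ∀ t ∈ Ioo t0 t1, HasDerivAt w (w1 t) t := by
    intro t ht
    have htpos : 0 < t := lt_trans ht0 ht.1
    have hS := hSpos t (Ioo_subset_Ico_self ht)
    have hSd : HasDerivAt (fun s => 1 + f s) (F t) t := (hfD t ht).const_add 1
    have hinv := hSd.inv (ne_of_gt hS)
    have h3 := (hVd t htpos).sub ((hasDerivAt_const t (1:ℝ)).sub hinv)
    simp only [hw, hw1]
    refine h3.congr_deriv (Eq.symm ?_)
    ring
  -- derivative of E = t^a * w1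
  have hED : ∀ t ∈ Ioo t0 t1, HasDerivAt (fun s => s ^ a * w1 s) (R t) t := by
    intro t ht
    have htpos : 0 < t := lt_trans ht0 ht.1
    have htne : t ≠ 0 := ne_of_gt htpos
    have hS := hSpos t (Ioo_subset_Ico_self ht)
    have hSne' : (1 + f t) ≠ 0 := ne_of_gt hS
    have hSd : HasDerivAt (fun s => 1 + f s) (F t) t := (hfD t ht).const_add 1
    have hq := (hFD t ht).div (hSd.pow 2) (pow_ne_zero 2 hSne')
    have hw1D := (hV1d t htpos).sub hq
    have hED' := (hrp a t htpos).mul hw1D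
    simp only [hw1] at hED' ⊢
    refine hED'.congr_deriv (Eq.symm ?_)
    simp only [hR, hw, hw1, hV, Pi.pow_apply, Pi.sub_apply, Pi.div_apply]
    rw [hode' t ht, hVode t htpos, show a - 1 = a - 1 from rfl]
    rw [show (t:ℝ) ^ (a - 1) = t ^ a / t by
      rw [eq_div_iff htne, hshift a t htne]]
    field_simp
    ring
  -- positivity hypotheses for aux2
  have hR0 : 0 < R t0 := by
    have h1 : w t0 = 0 := hw0
    simp only [hR, h1, hF0, hft0, mul_zero, zero_add]
    have h2 : 0 < (2 - c) * fi0 ^ 2 / (1 + fi) ^ 3 := by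
      apply div_pos (mul_pos (by linarith) (pow_pos hfi0 2)) (pow_pos (by linarith) 3)
    exact mul_pos (rpow_pos_of_pos ht0 a) h2
  have hRw : ∀ t ∈ Ioo t0 t1, 0 < w t → 0 < R t := by
    intro t ht hwt
    have htpos : 0 < t := lt_trans ht0 ht.1
    have hFt := hFpos t (Ioo_subset_Ico_self ht)
    have hSt := hSpos t (Ioo_subset_Ico_self ht)
    simp only [hR]
    apply mul_pos (rpow_pos_of_pos htpos a)
    have h1 : 0 < b / t ^ 2 * w t := mul_pos (div_pos hb (by positivity)) hwt
    have h2 : 0 < (2 - c) * F t ^ 2 / (1 + f t) ^ 3 :=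
      div_pos (mul_pos (by linarith) (pow_pos hFt 2)) (pow_pos hSt 3)
    linarith
  have hwpos := aux2 t0 t1 a ht0 ht01 w w1 R hw0 hw10 hwc hw1c hwd hED hRc hR0 hRw
  intro τ hτ
  have := hwpos τ hτ
  simp only [hw, hV] at this
  linarith
end

section
/- Suppose f ∈ C²([t0,t1)) (with t1 > t0) solves the ODE with the given initial data. Then for every t ∈ (t0,t1) the derivative f0(t) = ∂t f(t) satisfies 0 < f0(t) < −𝙱·△·t^((△+ā)/2 − 1)·(1+f(t))². -/
open Real Set Filter

lemma key_ident (t F F' F'' lm lp c a b T : ℝ) (ht : t ≠ 0) (hP : 1 + F ≠ 0)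
    (hsum : lm + lp = 1 - a) (hprod : lm * lp = -b)
    (hF'' : F'' + (a / t) * F' - (b / t ^ 2) * F * (1 + F) - (c / (1 + F)) * F' ^ 2 = 0) :
    (1 - lp) * (T / t) * (F' / (1 + F) ^ 2 - lm * F / (t * (1 + F))) +
      T * ((F'' * (1 + F) ^ 2 - F' * (2 * (1 + F) ^ 1 * F')) / ((1 + F) ^ 2) ^ 2
        - ((lm * F') * (t * (1 + F)) - lm * F * (1 * (1 + F) + t * F')) / (t * (1 + F)) ^ 2)
      = T * ((c - 2) * F' ^ 2 / (1 + F) ^ 3) := by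
  have ha' : a = 1 - lm - lp := by linarith
  have hb' : b = -(lm * lp) := by linarith
  subst ha' hb'
  have h2 : F'' = -((1 - lm - lp) / t) * F' + (-(lm * lp) / t ^ 2) * F * (1 + F)
      + (c / (1 + F)) * F' ^ 2 := by
    field_simp at hF'' ⊢
    linarith
  subst h2
  field_simp
  ring

/-- If `f ∈ C²([t0,t1))` solves the ODE with the given initial data, then
for every `t ∈ (t0,t1)` the derivative `f0 = f'` satisfies
`0 < f0(t) < −𝙱 △ t^((△+ā)/2 − 1) (1+f(t))²`. -/
theorem stmt_7
    (t0 t1 a b c fi fi0 abar delta BB : ℝ) (f : ℝ → ℝ)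
    (ht0 : 0 < t0) (ht01 : t0 < t1)
    (ha : 1 < a) (hb : 0 < b) (hc : 1 < c) (hc' : c < 3 / 2)
    (hfi : 0 < fi) (hfi0 : 0 < fi0)
    (habar : abar = 1 - a)
    (hdelta : delta = Real.sqrt ((1 - a) ^ 2 + 4 * b))
    (hBB : BB = t0 ^ (-((abar + delta) / 2)) / delta *
      ((abar - delta) / 2 * (fi / (1 + fi)) - t0 * fi0 / (1 + fi) ^ 2))
    (hreg : ContDiffOn ℝ 2 f (Set.Ico t0 t1))
    (hode : ∀ t ∈ Set.Ico t0 t1,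
      deriv (deriv f) t + (a / t) * deriv f t
        - (b / t ^ 2) * f t * (1 + f t)
        - (c / (1 + f t)) * (deriv f t) ^ 2 = 0)
    (hft0 : f t0 = fi) (hft0' : deriv f t0 = fi0) :
    ∀ t ∈ Set.Ioo t0 t1,
      0 < deriv f t ∧
      deriv f t < -BB * delta * t ^ ((delta + abar) / 2 - 1) * (1 + f t) ^ 2 := by
  have hIoo : Set.Ioo t0 t1 ⊆ Set.Ico t0 t1 := Ioo_subset_Ico_self
  have hu : UniqueDiffOn ℝ (Set.Ico t0 t1) := uniqueDiffOn_Ico t0 t1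
  have ht0mem : t0 ∈ Set.Ico t0 t1 := ⟨le_refl _, ht01⟩
  have hfc : ContinuousOn f (Set.Ico t0 t1) := hreg.continuousOn
  have hmemnhds : ∀ t ∈ Set.Ioo t0 t1, Set.Ico t0 t1 ∈ nhds t := fun t ht =>
    Ico_mem_nhds ht.1 ht.2
  have hdf : ∀ t ∈ Set.Ioo t0 t1, HasDerivAt f (deriv f t) t := by
    intro t ht
    exact ((hreg.differentiableOn (by norm_num)).differentiableAt (hmemnhds t ht)).hasDerivAt
  have hdiff_t0 : DifferentiableAt ℝ f t0 := by
    by_contra h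
    rw [deriv_zero_of_not_differentiableAt h] at hft0'
    exact absurd hft0'.symm (ne_of_gt hfi0)
  have hDW : ∀ t ∈ Set.Ico t0 t1, derivWithin f (Set.Ico t0 t1) t = deriv f t := by
    intro t ht
    rcases eq_or_lt_of_le ht.1 with h | h
    · rw [← h]
      exact (hdiff_t0.hasDerivAt.hasDerivWithinAt).derivWithin (hu t0 ht0mem)
    · exact derivWithin_of_mem_nhds (hmemnhds t ⟨h, ht.2⟩)
  have hdfc : ContinuousOn (deriv f) (Set.Ico t0 t1) :=
    (hreg.continuousOn_derivWithin hu (by norm_num)).congr fun t ht => (hDW t ht).symm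
  have hC1 : ContDiffOn ℝ 1 (derivWithin f (Set.Ico t0 t1)) (Set.Ico t0 t1) :=
    hreg.derivWithin hu (by norm_num)
  have hddf : ∀ t ∈ Set.Ioo t0 t1, HasDerivAt (deriv f) (deriv (deriv f) t) t := by
    intro t ht
    have h1 : DifferentiableAt ℝ (derivWithin f (Set.Ico t0 t1)) t :=
      (hC1.differentiableOn (by norm_num)).differentiableAt (hmemnhds t ht)
    have heq : derivWithin f (Set.Ico t0 t1) =ᶠ[nhds t] deriv f := by
      filter_upwards [(isOpen_Ioo (a := t0) (b := t1)).mem_nhds ht] with x hx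
      exact hDW x (hIoo hx)
    exact ((h1.congr_of_eventuallyEq heq.symm)).hasDerivAt
  -- Step 1 : deriv f > 0 on Ico
  have hpos : ∀ t ∈ Set.Ico t0 t1, 0 < deriv f t := by
    by_contra hcon
    push_neg at hcon
    obtain ⟨s0, hs0, hs0le⟩ := hcon
    have hs0t0 : t0 < s0 := by
      rcases eq_or_lt_of_le hs0.1 with h | h
      · exfalso; rw [← h, hft0'] at hs0le; linarith
      · exact h
    have hIccsub : Set.Icc t0 s0 ⊆ Set.Ico t0 t1 := fun x hx => ⟨hx.1, lt_of_le_of_lt hx.2 hs0.2⟩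
    set Z := Set.Icc t0 s0 ∩ (deriv f) ⁻¹' {0} with hZ
    have hZne : Z.Nonempty := by
      rcases eq_or_lt_of_le hs0le with h | h
      · exact ⟨s0, ⟨hs0t0.le, le_refl _⟩, h⟩
      · have h0 : (0 : ℝ) ∈ Set.Icc (deriv f s0) (deriv f t0) := ⟨hs0le, by rw [hft0']; linarith⟩
        obtain ⟨x, hx, hx0⟩ := intermediate_value_Icc' hs0t0.le (hdfc.mono hIccsub) h0
        exact ⟨x, hx, hx0⟩
    have hZclosed : IsClosed Z :=
      (hdfc.mono hIccsub).preimage_isClosed_of_isClosed isClosed_Icc isClosed_singleton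
    have hZbdd : BddBelow Z := ⟨t0, fun x hx => hx.1.1⟩
    set τ := sInf Z with hτ
    have hτZ : τ ∈ Z := hZclosed.csInf_mem hZne hZbdd
    have hτ0 : deriv f τ = 0 := hτZ.2
    have hτIcc : τ ∈ Set.Icc t0 s0 := hτZ.1
    have hτt0 : t0 < τ := by
      rcases eq_or_lt_of_le hτIcc.1 with h | h
      · exfalso; rw [← h, hft0'] at hτ0; linarith
      · exact h
    have hτIoo : τ ∈ Set.Ioo t0 t1 := ⟨hτt0, lt_of_le_of_lt hτIcc.2 hs0.2⟩
    have hposbefore : ∀ x ∈ Set.Ico t0 τ, 0 < deriv f x := by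
      intro x hx
      by_contra hxle
      push_neg at hxle
      rcases eq_or_lt_of_le hxle with h | h
      · have : x ∈ Z := ⟨⟨hx.1, hx.2.le.trans hτIcc.2⟩, by
          simp only [Set.mem_preimage, Set.mem_singleton_iff]; exact h⟩
        exact absurd (csInf_le hZbdd this) (not_le.mpr hx.2)
      · have hxt0 : t0 < x := by
          rcases eq_or_lt_of_le hx.1 with h' | h'
          · exfalso; rw [← h', hft0'] at h; linarith
          · exact h'
        have hsub : Set.Icc t0 x ⊆ Set.Ico t0 t1 := fun y hy =>
          ⟨hy.1, lt_of_le_of_lt hy.2 (lt_of_lt_of_le hx.2 (hτIcc.2.trans hs0.2.le))⟩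
        have h0 : (0 : ℝ) ∈ Set.Icc (deriv f x) (deriv f t0) := ⟨h.le, by rw [hft0']; linarith⟩
        obtain ⟨y, hy, hy0⟩ := intermediate_value_Icc' hxt0.le (hdfc.mono hsub) h0
        have hyZ : y ∈ Z := ⟨⟨hy.1, (hy.2.trans hx.2.le).trans hτIcc.2⟩, hy0⟩
        have : τ ≤ y := csInf_le hZbdd hyZ
        linarith [hy.2, hx.2]
    -- f τ > fi
    have hmono : StrictMonoOn f (Set.Icc t0 τ) := by
      apply strictMonoOn_of_deriv_pos (convex_Icc t0 τ)
      · exact hfc.mono fun y hy => ⟨hy.1, lt_of_le_of_lt hy.2 hτIoo.2⟩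
      · intro x hx
        rw [interior_Icc] at hx
        exact hposbefore x ⟨hx.1.le, hx.2⟩
    have hfτ : fi < f τ := by
      have := hmono ⟨le_refl _, hτt0.le⟩ ⟨hτt0.le, le_refl _⟩ hτt0
      rwa [hft0] at this
    have hPτ : 0 < 1 + f τ := by linarith
    -- second derivative at τ is positive
    have hodeτ := hode τ (hIoo hτIoo)
    rw [hτ0] at hodeτ
    have hF2 : deriv (deriv f) τ = (b / τ ^ 2) * f τ * (1 + f τ) := by
      field_simp at hodeτ ⊢
      have key : (1 + f τ) * (deriv (deriv f) τ - b * f τ * (1 + f τ) / τ ^ 2) = 0 := by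
        linear_combination hodeτ
      rcases mul_eq_zero.mp key with h | h
      · exact absurd h hPτ.ne'
      · linarith
    have hF2pos : 0 < deriv (deriv f) τ := by
      rw [hF2]
      have hτpos : 0 < τ := lt_trans ht0 hτt0
      have hfτpos : 0 < f τ := lt_trans hfi hfτ
      exact mul_pos (mul_pos (div_pos hb (pow_pos hτpos 2)) hfτpos) hPτ
    -- slope argument
    have hslope := hasDerivAt_iff_tendsto_slope.mp (hddf τ hτIoo)
    have hev : ∀ᶠ x in nhdsWithin τ {τ}ᶜ, 0 < slope (deriv f) τ x :=
      hslope.eventually (eventually_gt_nhds hF2pos)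
    have hle : nhdsWithin τ (Set.Iio τ) ≤ nhdsWithin τ {τ}ᶜ :=
      nhdsWithin_mono _ fun x hx => ne_of_lt hx
    have hev' : ∀ᶠ x in nhdsWithin τ (Set.Iio τ), 0 < slope (deriv f) τ x := hle hev
    have hmem : Set.Ioo t0 τ ∈ nhdsWithin τ (Set.Iio τ) := Ioo_mem_nhdsLT hτt0
    obtain ⟨x, hx1, hx2⟩ := (hev'.and (eventually_mem_set.mpr hmem)).exists
    rw [slope_def_field, hτ0] at hx1
    have hxneg : deriv f x < 0 := by
      have hxτ : x - τ < 0 := by linarith [hx2.2]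
      by_contra hge
      push_neg at hge
      have : (deriv f x - 0) / (x - τ) ≤ 0 :=
        div_nonpos_of_nonneg_of_nonpos (by linarith) hxτ.le
      linarith
    exact absurd (hposbefore x ⟨hx2.1.le, hx2.2⟩) (not_lt.mpr hxneg.le)
  -- monotonicity and lower bounds for f
  have hmonoI : StrictMonoOn f (Set.Ico t0 t1) := by
    apply strictMonoOn_of_deriv_pos (convex_Ico t0 t1) hfc
    intro x hx
    rw [interior_Ico] at hx
    exact hpos x (hIoo hx)
  have hflb : ∀ t ∈ Set.Ico t0 t1, fi ≤ f t := by
    intro t ht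
    rcases eq_or_lt_of_le ht.1 with h | h
    · rw [← h, hft0]
    · have := hmonoI ht0mem ht h
      rw [hft0] at this
      exact this.le
  have hP : ∀ t ∈ Set.Ico t0 t1, 0 < 1 + f t := fun t ht => by linarith [hflb t ht]
  -- constants
  have hdpos : 0 < delta := by
    rw [hdelta]
    apply Real.sqrt_pos.mpr
    positivity
  have hd2 : delta ^ 2 = (1 - a) ^ 2 + 4 * b := by
    rw [hdelta]
    exact Real.sq_sqrt (by positivity)
  set lp := (abar + delta) / 2 with hlp
  set lm := (abar - delta) / 2 with hlm
  have hsum : lm + lp = 1 - a := by rw [hlm, hlp, habar]; ring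
  have hprod : lm * lp = -b := by
    rw [hlm, hlp]
    have : (abar - delta) / 2 * ((abar + delta) / 2) = (abar ^ 2 - delta ^ 2) / 4 := by ring
    rw [this, hd2, habar]
    ring
  have hlmneg : lm < 0 := by
    rw [hlm, habar]
    nlinarith
  set q := 1 - lp with hq
  -- auxiliary function h
  set g : ℝ → ℝ := fun t => t ^ q * (deriv f t / (1 + f t) ^ 2 - lm * f t / (t * (1 + f t)))
    with hg
  -- h has negative derivative at interior points
  have hgderiv : ∀ t ∈ Set.Ioo t0 t1,
      HasDerivAt g (t ^ q * ((c - 2) * (deriv f t) ^ 2 / (1 + f t) ^ 3)) t := by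
    intro t ht
    have htpos : 0 < t := lt_trans ht0 ht.1
    have htne : t ≠ 0 := ne_of_gt htpos
    have hPt : 0 < 1 + f t := hP t (hIoo ht)
    have hPtne : 1 + f t ≠ 0 := ne_of_gt hPt
    have h1 : HasDerivAt (fun x : ℝ => x ^ q) (q * t ^ (q - 1)) t :=
      Real.hasDerivAt_rpow_const (Or.inl htne)
    have hft : HasDerivAt f (deriv f t) t := hdf t ht
    have hft2 : HasDerivAt (deriv f) (deriv (deriv f) t) t := hddf t ht
    have hPd : HasDerivAt (fun x => 1 + f x) (deriv f t) t := by
      exact hft.const_add 1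
    have hPd2 : HasDerivAt (fun x => (1 + f x) ^ 2) (2 * (1 + f t) ^ 1 * deriv f t) t :=
      hPd.pow 2
    have hterm1 : HasDerivAt (fun x => deriv f x / (1 + f x) ^ 2)
        ((deriv (deriv f) t * (1 + f t) ^ 2 - deriv f t * (2 * (1 + f t) ^ 1 * deriv f t))
          / ((1 + f t) ^ 2) ^ 2) t :=
      hft2.div hPd2 (pow_ne_zero 2 hPtne)
    have hnum : HasDerivAt (fun x => lm * f x) (lm * deriv f t) t := hft.const_mul lm
    have hden : HasDerivAt (fun x => x * (1 + f x)) (1 * (1 + f t) + t * deriv f t) t :=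
      (hasDerivAt_id t).mul hPd
    have hterm2 : HasDerivAt (fun x => lm * f x / (x * (1 + f x)))
        ((lm * deriv f t * (t * (1 + f t)) - lm * f t * (1 * (1 + f t) + t * deriv f t))
          / (t * (1 + f t)) ^ 2) t :=
      hnum.div hden (by positivity)
    have hmain := h1.mul (hterm1.sub hterm2)
    have heq : q * t ^ (q - 1) * (deriv f t / (1 + f t) ^ 2 - lm * f t / (t * (1 + f t))) +
        t ^ q * ((deriv (deriv f) t * (1 + f t) ^ 2
            - deriv f t * (2 * (1 + f t) ^ 1 * deriv f t)) / ((1 + f t) ^ 2) ^ 2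
          - (lm * deriv f t * (t * (1 + f t)) - lm * f t * (1 * (1 + f t) + t * deriv f t))
            / (t * (1 + f t)) ^ 2)
        = t ^ q * ((c - 2) * (deriv f t) ^ 2 / (1 + f t) ^ 3) := by
      have hrw : t ^ (q - 1) = t ^ q / t := by
        rw [Real.rpow_sub htpos, Real.rpow_one]
      rw [hrw, hq]
      exact key_ident t (f t) (deriv f t) (deriv (deriv f) t) lm lp c a b (t ^ (1 - lp))
        htne hPtne hsum hprod (hode t (hIoo ht))
    rw [← heq]
    exact hmain
  -- h is continuous on Ico
  have hgc : ContinuousOn g (Set.Ico t0 t1) := by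
    rw [hg]
    have htne : ∀ x ∈ Set.Ico t0 t1, x ≠ 0 := fun x hx => ne_of_gt (lt_of_lt_of_le ht0 hx.1)
    have hPne : ∀ x ∈ Set.Ico t0 t1, 1 + f x ≠ 0 := fun x hx => ne_of_gt (hP x hx)
    apply ContinuousOn.mul
    · exact continuousOn_id.rpow_const fun x hx => Or.inl (htne x hx)
    · apply ContinuousOn.sub
      · exact hdfc.div ((continuousOn_const.add hfc).pow 2)
          fun x hx => pow_ne_zero 2 (hPne x hx)
      · exact (continuousOn_const.mul hfc).div
          (continuousOn_id.mul (continuousOn_const.add hfc))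
          fun x hx => mul_ne_zero (htne x hx) (hPne x hx)
  -- h is strictly decreasing
  have hanti : StrictAntiOn g (Set.Ico t0 t1) := by
    apply strictAntiOn_of_deriv_neg (convex_Ico t0 t1) hgc
    intro x hx
    rw [interior_Ico] at hx
    rw [(hgderiv x hx).deriv]
    have hxpos : 0 < x := lt_trans ht0 hx.1
    have hPx : 0 < 1 + f x := hP x (hIoo hx)
    have hdfx : 0 < deriv f x := hpos x (hIoo hx)
    have h1 : (0:ℝ) < x ^ q := Real.rpow_pos_of_pos hxpos q
    have h2 : (c - 2) * (deriv f x) ^ 2 / (1 + f x) ^ 3 < 0 := by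
      apply div_neg_of_neg_of_pos
      · have : (0:ℝ) < (deriv f x) ^ 2 := by positivity
        nlinarith
      · positivity
    exact mul_neg_of_pos_of_neg h1 h2
  -- value of h at t0
  have hPfi : 0 < 1 + fi := by linarith
  have hgt0 : g t0 = -BB * delta := by
    show t0 ^ q * (deriv f t0 / (1 + f t0) ^ 2 - lm * f t0 / (t0 * (1 + f t0))) = -BB * delta
    rw [hft0, hft0', hBB]
    have e1 : t0 ^ q = t0 ^ (-lp) * t0 := by
      rw [hq, Real.rpow_sub ht0, Real.rpow_one, Real.rpow_neg ht0.le]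
      ring
    rw [e1]
    have hdne : delta ≠ 0 := ne_of_gt hdpos
    have ht0ne : t0 ≠ 0 := ne_of_gt ht0
    have hPfine : (1 + fi) ≠ 0 := ne_of_gt hPfi
    field_simp
    ring
  -- conclusion
  intro t ht
  refine ⟨hpos t (hIoo ht), ?_⟩
  have htpos : 0 < t := lt_trans ht0 ht.1
  have hPt : 0 < 1 + f t := hP t (hIoo ht)
  have hfpos : 0 < f t := lt_of_lt_of_le hfi (hflb t (hIoo ht))
  have hq1 : (0:ℝ) < t ^ q := Real.rpow_pos_of_pos htpos q
  have hlt : g t < g t0 := hanti ht0mem (hIoo ht) ht.1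
  rw [hgt0] at hlt
  have hlt' : t ^ q * (deriv f t / (1 + f t) ^ 2 - lm * f t / (t * (1 + f t)))
      < -BB * delta := hlt
  have hexp : (delta + abar) / 2 - 1 = -q := by rw [hq, hlp]; ring
  have hstep : deriv f t / (1 + f t) ^ 2 - lm * f t / (t * (1 + f t)) <
      -BB * delta * t ^ ((delta + abar) / 2 - 1) := by
    rw [hexp, Real.rpow_neg htpos.le, ← div_eq_mul_inv]
    exact (lt_div_iff₀ hq1).mpr (by linarith [hlt'])
  have hlmterm : 0 < - (lm * f t / (t * (1 + f t))) := by
    have h1 : lm * f t < 0 := mul_neg_of_neg_of_pos hlmneg hfpos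
    have h2 : 0 < t * (1 + f t) := by positivity
    have := div_neg_of_neg_of_pos h1 h2
    linarith
  have hfinal : deriv f t / (1 + f t) ^ 2 < -BB * delta * t ^ ((delta + abar) / 2 - 1) := by
    linarith
  have hPtne : ((1 + f t) ^ 2 : ℝ) ≠ 0 := pow_ne_zero 2 (ne_of_gt hPt)
  calc deriv f t = deriv f t / (1 + f t) ^ 2 * (1 + f t) ^ 2 := by
        rw [div_mul_cancel₀ _ hPtne]
    _ < -BB * delta * t ^ ((delta + abar) / 2 - 1) * (1 + f t) ^ 2 := by
        apply mul_lt_mul_of_pos_right hfinal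
        positivity
end

section
/- The set R := { t > t0 : 𝙰·t^((ā−△)/2) + 𝙱·t^((ā+△)/2) + 1 = 0 } is nonempty and has a minimum t_star = min R, and t_star > t0. -/
open Real Set

/-- The set `R = { t > t0 : 𝙰 t^((ā−△)/2) + 𝙱 t^((ā+△)/2) + 1 = 0 }`
is nonempty and has a minimum `t_star = min R`, and `t_star > t0`. -/
theorem stmt_9
    (t0 a b c fi fi0 abar delta AA BB : ℝ)
    (ht0 : 0 < t0)
    (ha : 1 < a) (hb : 0 < b) (hc : 1 < c) (hc' : c < 3 / 2)
    (hfi : 0 < fi) (hfi0 : 0 < fi0)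
    (habar : abar = 1 - a)
    (hdelta : delta = Real.sqrt ((1 - a) ^ 2 + 4 * b))
    (hAA : AA = t0 ^ (-((abar - delta) / 2)) / delta *
      (t0 * fi0 / (1 + fi) ^ 2 - (abar + delta) / 2 * (fi / (1 + fi))))
    (hBB : BB = t0 ^ (-((abar + delta) / 2)) / delta *
      ((abar - delta) / 2 * (fi / (1 + fi)) - t0 * fi0 / (1 + fi) ^ 2)) :
    ∃ tstar : ℝ,
      IsLeast {t : ℝ | t0 < t ∧
        AA * t ^ ((abar - delta) / 2) + BB * t ^ ((abar + delta) / 2) + 1 = 0} tstar ∧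
      t0 < tstar := by
  set p := (abar - delta) / 2 with hp_def
  set q := (abar + delta) / 2 with hq_def
  set g : ℝ → ℝ := fun t => AA * t ^ p + BB * t ^ q + 1 with hg_def
  -- basic facts
  have hdpos : 0 < delta := by
    rw [hdelta]
    apply Real.sqrt_pos.mpr
    nlinarith [sq_nonneg (1 - a)]
  have hdsq : delta ^ 2 = (1 - a) ^ 2 + 4 * b := by
    rw [hdelta]; exact Real.sq_sqrt (by nlinarith [sq_nonneg (1 - a)])
  have habar_neg : abar < 0 := by rw [habar]; linarith
  have hq_pos : 0 < q := by
    have : 0 < abar + delta := by nlinarith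
    rw [hq_def]; linarith
  have hp_neg : p < 0 := by rw [hp_def]; linarith
  have hfne : (1 : ℝ) + fi ≠ 0 := by positivity
  -- value at t0
  have h1 : t0 ^ (-p) * t0 ^ p = 1 := by
    rw [← Real.rpow_add ht0]; simp
  have h2 : t0 ^ (-q) * t0 ^ q = 1 := by
    rw [← Real.rpow_add ht0]; simp
  have hgt0 : g t0 = 1 / (1 + fi) := by
    have e1 : AA * t0 ^ p =
        (t0 * fi0 / (1 + fi) ^ 2 - q * (fi / (1 + fi))) / delta := by
      calc AA * t0 ^ p = t0 ^ (-p) * t0 ^ p *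
            ((t0 * fi0 / (1 + fi) ^ 2 - q * (fi / (1 + fi))) / delta) := by
            rw [hAA]; ring
        _ = _ := by rw [h1, one_mul]
    have e2 : BB * t0 ^ q = 
        (p * (fi / (1 + fi)) - t0 * fi0 / (1 + fi) ^ 2) / delta := by
      calc BB * t0 ^ q = t0 ^ (-q) * t0 ^ q *
            ((p * (fi / (1 + fi)) - t0 * fi0 / (1 + fi) ^ 2) / delta) := by
            rw [hBB]; ring
        _ = _ := by rw [h2, one_mul]
    simp only [hg_def]
    rw [e1, e2]
    simp only [hp_def, hq_def]
    field_simp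
    ring
  have hgt0_pos : 0 < g t0 := by rw [hgt0]; positivity
  -- BB < 0
  have hBBneg : BB < 0 := by
    rw [hBB]
    apply mul_neg_of_pos_of_neg
    · positivity
    · have h3 : p * (fi / (1 + fi)) < 0 := by
        apply mul_neg_of_neg_of_pos
        · exact hp_neg
        · positivity
      have h4 : 0 < t0 * fi0 / (1 + fi) ^ 2 := by positivity
      linarith
  -- choose large M with g M ≤ -1
  set C0 := |AA| * t0 ^ p with hC0_def
  have hC0_nonneg : 0 ≤ C0 := by
    apply mul_nonneg (abs_nonneg _) (Real.rpow_pos_of_pos ht0 _).le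
  set K := (C0 + 2) / (-BB) with hK_def
  have hKpos : 0 < K := by
    apply div_pos (by linarith) (by linarith)
  set M := max (t0 + 1) (K ^ q⁻¹) with hM_def
  have ht0M : t0 < M := lt_of_lt_of_le (by linarith) (le_max_left _ _)
  have hMpos : 0 < M := lt_trans ht0 ht0M
  have hMq : K ≤ M ^ q := by
    have h5 : K ^ q⁻¹ ≤ M := le_max_right _ _
    have h6 : (K ^ q⁻¹) ^ q ≤ M ^ q :=
      Real.rpow_le_rpow (Real.rpow_nonneg hKpos.le _) h5 hq_pos.le
    rwa [← Real.rpow_mul hKpos.le, inv_mul_cancel₀ hq_pos.ne',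
      Real.rpow_one] at h6
  have hAAM : AA * M ^ p ≤ C0 := by
    have h7 : M ^ p ≤ t0 ^ p :=
      Real.rpow_le_rpow_of_nonpos ht0 ht0M.le hp_neg.le
    calc AA * M ^ p ≤ |AA| * M ^ p := by
          apply mul_le_mul_of_nonneg_right (le_abs_self _)
            (Real.rpow_pos_of_pos hMpos _).le
      _ ≤ |AA| * t0 ^ p := by
          apply mul_le_mul_of_nonneg_left h7 (abs_nonneg _)
      _ = C0 := rfl
  have hBBM : BB * M ^ q ≤ -(C0 + 2) := by
    have := mul_le_mul_of_nonpos_left hMq hBBneg.le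
    calc BB * M ^ q ≤ BB * K := this
      _ = -(C0 + 2) := by
          rw [hK_def]; field_simp [hBBneg.ne]
  have hgM : g M ≤ -1 := by
    simp only [hg_def]
    linarith
  -- continuity on [t0, M]
  have hcont : ContinuousOn g (Icc t0 M) := by
    intro x hx
    have hxpos : (0 : ℝ) < x := lt_of_lt_of_le ht0 hx.1
    have c1 : ContinuousAt (fun t : ℝ => t ^ p) x :=
      Real.continuousAt_rpow_const x p (Or.inl hxpos.ne')
    have c2 : ContinuousAt (fun t : ℝ => t ^ q) x :=
      Real.continuousAt_rpow_const x q (Or.inl hxpos.ne')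
    exact (((continuousAt_const.mul c1).add (continuousAt_const.mul c2)).add
      continuousAt_const).continuousWithinAt
  -- IVT: zero exists
  have hivt : (0 : ℝ) ∈ g '' Icc t0 M := by
    apply intermediate_value_Icc' ht0M.le hcont
    constructor <;> linarith
  obtain ⟨T, hTmem, hgT⟩ := hivt
  -- the compact set of zeros in [t0, M]
  set C : Set ℝ := Icc t0 M ∩ g ⁻¹' {0} with hC_def
  have hCclosed : IsClosed C :=
    hcont.preimage_isClosed_of_isClosed isClosed_Icc isClosed_singleton
  have hCcompact : IsCompact C :=
    isCompact_Icc.of_isClosed_subset hCclosed inter_subset_left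
  have hCne : C.Nonempty := ⟨T, hTmem, by simpa using hgT⟩
  obtain ⟨u, huC, hule⟩ := hCcompact.exists_isLeast hCne
  have hgu : g u = 0 := by simpa using huC.2
  have hut0 : t0 < u := by
    rcases lt_or_eq_of_le huC.1.1 with h | h
    · exact h
    · exfalso; rw [← h] at hgu; rw [hgu] at hgt0_pos; linarith
  refine ⟨u, ⟨⟨hut0, hgu⟩, ?_⟩, hut0⟩
  rintro s ⟨hs1, hs2⟩
  by_cases hsM : s ≤ M
  · exact hule ⟨⟨le_of_lt hs1, hsM⟩, by simpa using hs2⟩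
  · push_neg at hsM
    exact le_trans huC.1.2 hsM.le
end

section
/- Assume the initial data satisfies f̊0 > ā·(1+f̊)/(c̄·t0) (equivalently t0^ā > 𝙴^(−1)), and assume there exists a C² solution f of the ODE on a maximal interval [t0,t_m) with t_m ≥ t_star (as guaranteed by the a priori estimates). Then t^star := (t0^ā − 𝙴^(−1))^(1/ā) is well defined, finite, and t0 < t_star < t^star < ∞. -/
set_option maxHeartbeats 1000000


open Real Set Filter Topology MeasureTheory intervalIntegral

/-- The half-open time interval `[t0, tm)`, where the endpoint `tm` is an extended real
(allowing `tm = ∞`). -/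
def odeDom (t0 : ℝ) (tm : EReal) : Set ℝ := {t : ℝ | t0 ≤ t ∧ (t : EReal) < tm}

/-- The filter of approach `t → tm⁻` on `ℝ`, for an extended-real endpoint `tm`
(for finite `tm` this is `𝓝[<] tm`, for `tm = ∞` it is `atTop`). -/
noncomputable def approachF (tm : EReal) : Filter ℝ :=
  Filter.comap (fun x : ℝ => (x : EReal)) (nhdsWithin tm (Set.Iio tm))

/-- `f` is a `C²` solution on `[t0, tm)` of the ODE
`f'' + (a/t) f' − (b/t²) f (1+f) − (c/(1+f)) (f')² = 0` with data `f(t0) = f̊`, `f'(t0) = f̊0`. -/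
def IsSol (t0 a b c fi fi0 : ℝ) (f : ℝ → ℝ) (tm : EReal) : Prop :=
  (t0 : EReal) < tm ∧
  ContDiffOn ℝ 2 f (odeDom t0 tm) ∧
  (∀ t ∈ odeDom t0 tm,
    deriv (deriv f) t + (a / t) * deriv f t
      - (b / t ^ 2) * f t * (1 + f t)
      - (c / (1 + f t)) * (deriv f t) ^ 2 = 0) ∧
  f t0 = fi ∧ deriv f t0 = fi0

/-- `f` is a solution on `[t0, tm)` and `[t0, tm)` is the maximal interval of existence:
no solution on a strictly larger interval agrees with `f` on `[t0, tm)`. -/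
def IsMaxSol (t0 a b c fi fi0 : ℝ) (f : ℝ → ℝ) (tm : EReal) : Prop :=
  IsSol t0 a b c fi fi0 f tm ∧
  ∀ (F : ℝ → ℝ) (tm' : EReal), tm < tm' → IsSol t0 a b c fi fi0 F tm' →
    ¬ Set.EqOn F f (odeDom t0 tm)

/-- Assume the data condition `f̊0 > ā(1+f̊)/(c̄ t0)` (equivalently
`t0^ā > 𝙴⁻¹`), and assume there is a `C²` solution of the ODE on a maximal interval
`[t0,t_m)` with `t_m ≥ t_star`. Then `t^star = (t0^ā − 𝙴⁻¹)^(1/ā)` is well defined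
(`t0^ā − 𝙴⁻¹ > 0`), finite, and `t0 < t_star < t^star < ∞`. -/
theorem stmt_10
    (t0 a b c fi fi0 abar cbar delta AA BB EE tstar : ℝ)
    (ht0 : 0 < t0)
    (ha : 1 < a) (hb : 0 < b) (hc : 1 < c) (hc' : c < 3 / 2)
    (hfi : 0 < fi) (hfi0 : 0 < fi0)
    (habar : abar = 1 - a) (hcbar : cbar = 1 - c)
    (hdelta : delta = Real.sqrt ((1 - a) ^ 2 + 4 * b))
    (hAA : AA = t0 ^ (-((abar - delta) / 2)) / delta *
      (t0 * fi0 / (1 + fi) ^ 2 - (abar + delta) / 2 * (fi / (1 + fi))))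
    (hBB : BB = t0 ^ (-((abar + delta) / 2)) / delta *
      ((abar - delta) / 2 * (fi / (1 + fi)) - t0 * fi0 / (1 + fi) ^ 2))
    (hEE : EE = cbar * fi0 * t0 ^ (1 - abar) / (abar * (1 + fi)))
    (htstar : IsLeast {t : ℝ | t0 < t ∧
      AA * t ^ ((abar - delta) / 2) + BB * t ^ ((abar + delta) / 2) + 1 = 0} tstar)
    (hdata : fi0 > abar * (1 + fi) / (cbar * t0))
    (hsol : ∃ (f : ℝ → ℝ) (tm : EReal),
      IsMaxSol t0 a b c fi fi0 f tm ∧ (tstar : EReal) ≤ tm) :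
    0 < t0 ^ abar - EE⁻¹ ∧
    t0 < tstar ∧
    tstar < (t0 ^ abar - EE⁻¹) ^ (1 / abar) := by
  subst habar hcbar
  have ht1 : t0 < tstar := htstar.1.1
  have hroot : AA * tstar ^ ((1 - a - delta) / 2) + BB * tstar ^ ((1 - a + delta) / 2) + 1 = 0 :=
    htstar.1.2
  have hts0 : 0 < tstar := ht0.trans ht1
  have hfi1 : (0:ℝ) < 1 + fi := by linarith
  have hfine : (1 + fi) ≠ 0 := ne_of_gt hfi1
  have h1ane : (1 - a) ≠ 0 := by intro h; linarith [h]
  have hδpos : 0 < delta := by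
    rw [hdelta]; apply Real.sqrt_pos.2; positivity
  have hδne : delta ≠ 0 := ne_of_gt hδpos
  have hd2 : delta ^ 2 = (1 - a) ^ 2 + 4 * b := by
    rw [hdelta]; exact Real.sq_sqrt (by positivity)
  set p := (1 - a - delta) / 2 with hpdef
  set q := (1 - a + delta) / 2 with hqdef
  have hqp : q - p = delta := by rw [hpdef, hqdef]; ring
  have hpq : p * q = -b := by rw [hpdef, hqdef]; linear_combination (-1/4) * hd2
  have hqpos : 0 < q := by
    have : a - 1 < delta := by nlinarith [hd2, hδpos, sq_nonneg (delta - (a - 1))]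
    rw [hqdef]; linarith
  have hppos : p < 0 := by rw [hpdef]; linarith
  have ht0p : (0:ℝ) < t0 ^ p := Real.rpow_pos_of_pos ht0 p
  have ht0q : (0:ℝ) < t0 ^ q := Real.rpow_pos_of_pos ht0 q
  have htapos : (0:ℝ) < t0 ^ a := Real.rpow_pos_of_pos ht0 a
  have hAA2 : delta * AA * t0 ^ p * (1 + fi) ^ 2 = t0 * fi0 - q * fi * (1 + fi) := by
    rw [hAA, Real.rpow_neg ht0.le]
    field_simp
  have hBB2 : delta * BB * t0 ^ q * (1 + fi) ^ 2 = p * fi * (1 + fi) - t0 * fi0 := by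
    rw [hBB, Real.rpow_neg ht0.le]
    field_simp
  have hBBneg : BB < 0 := by
    by_contra hge
    push_neg at hge
    have h1 : 0 ≤ delta * BB * t0 ^ q * (1 + fi) ^ 2 := by
      have := mul_nonneg (mul_nonneg (mul_nonneg hδpos.le hge) ht0q.le) (sq_nonneg (1 + fi))
      exact this
    rw [hBB2] at h1
    nlinarith [mul_pos ht0 hfi0, mul_pos hfi hfi1, hppos, mul_pos (mul_pos hfi hfi1) (neg_pos.2 hppos)]
  set F : ℝ → ℝ := fun t => AA * t ^ p + BB * t ^ q with hFdef
  have hFder : ∀ x : ℝ, 0 < x →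
      HasDerivAt F (AA * (p * x ^ (p - 1)) + BB * (q * x ^ (q - 1))) x := by
    intro x hx
    rw [hFdef]
    exact ((Real.hasDerivAt_rpow_const (Or.inl hx.ne')).const_mul AA).add
      ((Real.hasDerivAt_rpow_const (Or.inl hx.ne')).const_mul BB)
  have hFt0m : delta * (1 + fi) ^ 2 * F t0 = -(delta * fi * (1 + fi)) := by
    show delta * (1 + fi) ^ 2 * (AA * t0 ^ p + BB * t0 ^ q) = -(delta * fi * (1 + fi))
    linear_combination hAA2 + hBB2 - fi * (1 + fi) * hqp
  have hFt0v : F t0 * (1 + fi) = -fi := by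
    have hne : (delta * (1 + fi)) ≠ 0 := by positivity
    apply mul_left_cancel₀ hne
    linear_combination hFt0m
  have hFt0neg : F t0 < 0 := by nlinarith [hFt0v, hfi, hfi1]
  have hFnonpos : ∀ x ∈ Icc t0 tstar, F x ≤ 0 := by
    rcases le_or_gt AA 0 with hA | hA
    · intro x hx
      have hx0 : 0 < x := lt_of_lt_of_le ht0 hx.1
      have h1 : AA * x ^ p ≤ 0 :=
        mul_nonpos_of_nonpos_of_nonneg hA (Real.rpow_pos_of_pos hx0 p).le
      have h2 : BB * x ^ q ≤ 0 :=
        mul_nonpos_of_nonpos_of_nonneg hBBneg.le (Real.rpow_pos_of_pos hx0 q).le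
      show AA * x ^ p + BB * x ^ q ≤ 0
      linarith
    · have hanti : AntitoneOn F (Icc t0 tstar) := by
        apply antitoneOn_of_deriv_nonpos (convex_Icc _ _)
        · intro x hx
          exact ((hFder x (lt_of_lt_of_le ht0 hx.1)).continuousAt).continuousWithinAt
        · intro x hx
          rw [interior_Icc] at hx
          exact ((hFder x (ht0.trans hx.1)).differentiableAt).differentiableWithinAt
        · intro x hx
          rw [interior_Icc] at hx
          have hx0 : 0 < x := ht0.trans hx.1
          rw [(hFder x hx0).deriv]
          have e1 : 0 < x ^ (p - 1) := Real.rpow_pos_of_pos hx0 _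
          have e2 : 0 < x ^ (q - 1) := Real.rpow_pos_of_pos hx0 _
          have hA1 : AA * (p * x ^ (p - 1)) < 0 :=
            mul_neg_of_pos_of_neg hA (mul_neg_of_neg_of_pos hppos e1)
          have hB1 : BB * (q * x ^ (q - 1)) < 0 :=
            mul_neg_of_neg_of_pos hBBneg (mul_pos hqpos e2)
          linarith
      intro x hx
      have := hanti (left_mem_Icc.2 ht1.le) hx hx.1
      linarith
  set J : ℝ → ℝ := fun t => AA * p * t ^ (p + a - 1) + BB * q * t ^ (q + a - 1) with hJdef
  have hJder : ∀ x : ℝ, 0 < x →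
      HasDerivAt J (AA * p * ((p + a - 1) * x ^ (p + a - 1 - 1))
        + BB * q * ((q + a - 1) * x ^ (q + a - 1 - 1))) x := by
    intro x hx
    rw [hJdef]
    exact ((Real.hasDerivAt_rpow_const (Or.inl hx.ne')).const_mul (AA * p)).add
      ((Real.hasDerivAt_rpow_const (Or.inl hx.ne')).const_mul (BB * q))
  have hJanti : AntitoneOn J (Icc t0 tstar) := by
    apply antitoneOn_of_deriv_nonpos (convex_Icc _ _)
    · intro x hx
      exact ((hJder x (lt_of_lt_of_le ht0 hx.1)).continuousAt).continuousWithinAt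
    · intro x hx
      rw [interior_Icc] at hx
      exact ((hJder x (ht0.trans hx.1)).differentiableAt).differentiableWithinAt
    · intro x hx
      rw [interior_Icc] at hx
      have hx0 : 0 < x := ht0.trans hx.1
      rw [(hJder x hx0).deriv]
      have hFx : F x ≤ 0 := hFnonpos x ⟨hx.1.le, hx.2.le⟩
      have e1 : x ^ (p + a - 1 - 1) = x ^ p * x ^ (a - 2) := by
        rw [show p + a - 1 - 1 = p + (a - 2) by ring, Real.rpow_add hx0]
      have e2 : x ^ (q + a - 1 - 1) = x ^ q * x ^ (a - 2) := by
        rw [show q + a - 1 - 1 = q + (a - 2) by ring, Real.rpow_add hx0]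
      have hsum1 : p + a - 1 = -q := by rw [hpdef, hqdef]; ring
      have hsum2 : q + a - 1 = -p := by rw [hpdef, hqdef]; ring
      have key : AA * p * ((p + a - 1) * x ^ (p + a - 1 - 1))
          + BB * q * ((q + a - 1) * x ^ (q + a - 1 - 1))
          = b * x ^ (a - 2) * F x := by
        show _ = b * x ^ (a - 2) * (AA * x ^ p + BB * x ^ q)
        rw [e1, e2, hsum1, hsum2]
        linear_combination (-(x ^ (a - 2)) * (AA * x ^ p + BB * x ^ q)) * hpq
      rw [key]
      have : 0 ≤ b * x ^ (a - 2) := by positivity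
      exact mul_nonpos_of_nonneg_of_nonpos this hFx
  have hJt0m : delta * (1 + fi) ^ 2 * J t0 = -(delta * (t0 ^ a * fi0)) := by
    have eA : t0 ^ (p + a - 1) = t0 ^ p * t0 ^ (a - 1) := by
      rw [show p + a - 1 = p + (a - 1) by ring, Real.rpow_add ht0]
    have eB : t0 ^ (q + a - 1) = t0 ^ q * t0 ^ (a - 1) := by
      rw [show q + a - 1 = q + (a - 1) by ring, Real.rpow_add ht0]
    have eC : t0 ^ a = t0 ^ (a - 1) * t0 := by
      rw [show a = (a - 1) + 1 by ring, Real.rpow_add ht0, Real.rpow_one]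
      ring_nf
    show delta * (1 + fi) ^ 2 * (AA * p * t0 ^ (p + a - 1) + BB * q * t0 ^ (q + a - 1)) = _
    rw [eA, eB, eC]
    linear_combination (p * t0 ^ (a - 1)) * hAA2 + (q * t0 ^ (a - 1)) * hBB2
      - (t0 ^ (a - 1) * t0 * fi0) * hqp
  have hJt0v : J t0 * (1 + fi) ^ 2 = -(t0 ^ a * fi0) := by
    apply mul_left_cancel₀ hδne
    linear_combination hJt0m
  set C : ℝ := t0 ^ a * fi0 / ((1 - a) * (1 + fi) ^ 2) with hCdef
  have hC2 : C * ((1 - a) * (1 + fi) ^ 2) = t0 ^ a * fi0 := by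
    rw [hCdef]
    exact div_mul_cancel₀ _ (mul_ne_zero h1ane (pow_ne_zero 2 hfine))
  set Φ : ℝ → ℝ := fun t => F t + fi / (1 + fi) + C * (t ^ (1 - a) - t0 ^ (1 - a)) with hPdef
  have hPder : ∀ x : ℝ, 0 < x →
      HasDerivAt Φ (AA * (p * x ^ (p - 1)) + BB * (q * x ^ (q - 1))
        + C * ((1 - a) * x ^ (1 - a - 1))) x := by
    intro x hx
    rw [hPdef]
    exact ((hFder x hx).add_const (fi / (1 + fi))).add
      (((Real.hasDerivAt_rpow_const (Or.inl hx.ne')).sub_const (t0 ^ (1 - a))).const_mul C)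
  have hPanti : AntitoneOn Φ (Icc t0 tstar) := by
    apply antitoneOn_of_deriv_nonpos (convex_Icc _ _)
    · intro x hx
      exact ((hPder x (lt_of_lt_of_le ht0 hx.1)).continuousAt).continuousWithinAt
    · intro x hx
      rw [interior_Icc] at hx
      exact ((hPder x (ht0.trans hx.1)).differentiableAt).differentiableWithinAt
    · intro x hx
      rw [interior_Icc] at hx
      have hx0 : 0 < x := ht0.trans hx.1
      rw [(hPder x hx0).deriv]
      have hJx : J x ≤ J t0 := hJanti (left_mem_Icc.2 ht1.le) ⟨hx.1.le, hx.2.le⟩ hx.1.le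
      have e1 : x ^ (p - 1) = x ^ (p + a - 1) * x ^ (-a) := by
        rw [show p - 1 = (p + a - 1) + -a by ring, Real.rpow_add hx0]
      have e2 : x ^ (q - 1) = x ^ (q + a - 1) * x ^ (-a) := by
        rw [show q - 1 = (q + a - 1) + -a by ring, Real.rpow_add hx0]
      have e3 : x ^ (1 - a - 1) = x ^ (-a) := by
        rw [show 1 - a - 1 = -a by ring]
      have hxa : (0:ℝ) < x ^ (-a) := Real.rpow_pos_of_pos hx0 _
      have hkey : (AA * (p * x ^ (p - 1)) + BB * (q * x ^ (q - 1))
            + C * ((1 - a) * x ^ (1 - a - 1))) * (1 + fi) ^ 2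
          = x ^ (-a) * ((1 + fi) ^ 2 * J x + t0 ^ a * fi0) := by
        show _ = x ^ (-a) * ((1 + fi) ^ 2 *
          (AA * p * x ^ (p + a - 1) + BB * q * x ^ (q + a - 1)) + t0 ^ a * fi0)
        rw [e1, e2, e3]
        linear_combination (x ^ (-a)) * hC2
      have hineq : (1 + fi) ^ 2 * J x + t0 ^ a * fi0 ≤ 0 := by
        have h1 := mul_le_mul_of_nonneg_left hJx (sq_nonneg (1 + fi))
        linarith [hJt0v]
      have hprod : (AA * (p * x ^ (p - 1)) + BB * (q * x ^ (q - 1))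
          + C * ((1 - a) * x ^ (1 - a - 1))) * (1 + fi) ^ 2 ≤ 0 := by
        rw [hkey]
        exact mul_nonpos_of_nonneg_of_nonpos hxa.le hineq
      have h2 : (AA * (p * x ^ (p - 1)) + BB * (q * x ^ (q - 1))
          + C * ((1 - a) * x ^ (1 - a - 1))) * (1 + fi) ^ 2 ≤ 0 * (1 + fi) ^ 2 := by
        rw [zero_mul]; exact hprod
      exact le_of_mul_le_mul_right h2 (pow_pos hfi1 2)
  have hPt0 : Φ t0 = 0 := by
    show F t0 + fi / (1 + fi) + C * (t0 ^ (1 - a) - t0 ^ (1 - a)) = 0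
    rw [sub_self, mul_zero, add_zero]
    field_simp
    linear_combination hFt0v
  have hPts : Φ tstar ≤ 0 := by
    have := hPanti (left_mem_Icc.2 ht1.le) (right_mem_Icc.2 ht1.le) ht1.le
    rw [hPt0] at this
    exact this
  have hPts' : F tstar + fi / (1 + fi) + C * (tstar ^ (1 - a) - t0 ^ (1 - a)) ≤ 0 := hPts
  have hFts : F tstar = -1 := by
    show AA * tstar ^ p + BB * tstar ^ q = -1
    linarith [hroot]
  -- algebraic endgame
  rw [show (1 : ℝ) - (1 - a) = a by ring] at hEE
  have hEE3 : EE * ((1 - a) * (1 + fi)) = (1 - c) * fi0 * t0 ^ a := by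
    rw [hEE]; field_simp
  have hden : (1 - a) * (1 + fi) < 0 := mul_neg_of_neg_of_pos (by linarith) hfi1
  have hnum : (1 - c) * fi0 * t0 ^ a < 0 :=
    mul_neg_of_neg_of_pos (mul_neg_of_neg_of_pos (by linarith) hfi0) htapos
  have hEEpos : 0 < EE := by
    by_contra hcon
    push_neg at hcon
    have h1 := mul_nonneg (neg_nonneg.2 hcon) (neg_nonneg.2 hden.le)
    linarith [hEE3, hnum, h1]
  have hEe : EE * EE⁻¹ = 1 := mul_inv_cancel₀ hEEpos.ne'
  have hEinv : (1 - a) * (1 + fi) = EE⁻¹ * ((1 - c) * fi0 * t0 ^ a) := by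
    linear_combination EE⁻¹ * hEE3 - ((1 - a) * (1 + fi)) * hEe
  have hepos : 0 < EE⁻¹ := inv_pos.2 hEEpos
  have hSta : t0 ^ (1 - a) * t0 ^ a = t0 := by
    rw [← Real.rpow_add ht0, show (1 - a) + a = (1:ℝ) by ring, Real.rpow_one]
  -- Goal 1
  have hdata' : fi0 * ((1 - c) * t0) < (1 - a) * (1 + fi) := by
    have hneg : (1 - c) * t0 < 0 := mul_neg_of_neg_of_pos (by linarith) ht0
    exact (div_lt_iff_of_neg hneg).mp hdata
  have h8 : fi0 * ((1 - c) * t0) < EE⁻¹ * ((1 - c) * fi0 * t0 ^ a) := by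
    rw [← hEinv]; exact hdata'
  have h9 : EE⁻¹ * t0 ^ a < t0 := by
    by_contra hcon
    push_neg at hcon
    have hm : (1 - c) * fi0 < 0 := mul_neg_of_neg_of_pos (by linarith) hfi0
    have h1 := mul_le_mul_of_nonpos_left hcon hm.le
    linarith [h8, h1]
  have goal1 : 0 < t0 ^ (1 - a) - EE⁻¹ := by
    by_contra hcon
    push_neg at hcon
    have h1 := mul_le_mul_of_nonneg_right (show t0 ^ (1 - a) ≤ EE⁻¹ by linarith) htapos.le
    linarith [hSta, h9, h1]
  refine ⟨goal1, ht1, ?_⟩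
  -- Goal 3
  have hcb : C * (tstar ^ (1 - a) - t0 ^ (1 - a)) ≤ 1 / (1 + fi) := by
    have hfr : fi / (1 + fi) + 1 / (1 + fi) = 1 := by
      field_simp
      ring
    rw [hFts] at hPts'
    linarith
  have hpos2 : (0:ℝ) < (a - 1) * (1 + fi) ^ 2 :=
    mul_pos (by linarith) (pow_pos hfi1 2)
  have h5 := mul_le_mul_of_nonneg_left hcb hpos2.le
  have h6 : (a - 1) * (1 + fi) ^ 2 * (1 / (1 + fi)) = (a - 1) * (1 + fi) := by
    field_simp
  have h7 : (a - 1) * (1 + fi) ^ 2 * (C * (tstar ^ (1 - a) - t0 ^ (1 - a)))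
      = -(t0 ^ a * fi0 * (tstar ^ (1 - a) - t0 ^ (1 - a))) := by
    linear_combination (-(tstar ^ (1 - a) - t0 ^ (1 - a))) * hC2
  have hD : (1 - a) * (1 + fi) ≤ t0 ^ a * fi0 * (tstar ^ (1 - a) - t0 ^ (1 - a)) := by
    linarith [h5, h6.symm ▸ h5, h7]
  have hecomp : (a - 1) * (1 + fi) < EE⁻¹ * (fi0 * t0 ^ a) := by
    have hP : 0 < EE⁻¹ * (fi0 * t0 ^ a) := mul_pos hepos (mul_pos hfi0 htapos)
    have h2c : (0:ℝ) < 2 - c := by linarith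
    have h3 := mul_pos hP h2c
    linarith [hEinv, h3]
  have hTX : t0 ^ (1 - a) - EE⁻¹ < tstar ^ (1 - a) := by
    by_contra hcon
    push_neg at hcon
    have h1 := mul_le_mul_of_nonneg_left
      (show tstar ^ (1 - a) - t0 ^ (1 - a) ≤ -EE⁻¹ by linarith)
      (mul_pos htapos hfi0).le
    linarith [hD, hecomp, h1]
  have hz : 1 / (1 - a) < 0 := div_neg_of_pos_of_neg one_pos (by linarith)
  have h11 := Real.rpow_lt_rpow_of_neg goal1 hTX hz
  have h12 : (tstar ^ (1 - a)) ^ (1 / (1 - a)) = tstar := by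
    rw [← Real.rpow_mul hts0.le, mul_one_div_cancel h1ane, Real.rpow_one]
  rw [h12] at h11
  exact h11
end
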